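/- arXiv:1104.2729 — 6 statements merged into one kernel-verified Lean document; each statement's English description precedes it below -/
import Mathlib

section
/- Under Assumption (W) the posterior measure is locally Lipschitz in the data with respect to the Hellinger metric: for every r > 0 there exists a constant c(r) > 0 such that for all y, y' ∈ ℝ^m with |y| ≤ r and |y'| ≤ r one has d_Hell(μ^y, μ^{y'}) ≤ c(r)·|y − y'|. -/
open MeasureTheory Real

/-- Lipschitz-type bound for `exp` on the left half line (one-sided version). -/
lemma aux_exp_sub_le {a b : ℝ} (hb : 0 ≤ b) (h : b ≤ a) :
    Real.exp (-b) - Real.exp (-a) ≤ a - b := by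
  have key : Real.exp (-a) = Real.exp (-b) * Real.exp (b - a) := by
    rw [← Real.exp_add]; ring_nf
  have e1 : 1 + (b - a) ≤ Real.exp (b - a) := by
    have := Real.add_one_le_exp (b - a); linarith
  have e2 : Real.exp (-b) ≤ 1 := Real.exp_le_one_iff.2 (by linarith)
  have e3 : Real.exp (b - a) ≤ 1 := Real.exp_le_one_iff.2 (by linarith)
  have e4 : (0:ℝ) < Real.exp (-b) := Real.exp_pos _
  nlinarith

/-- `exp (-·)` is 1-Lipschitz on the nonnegative reals. -/
lemma aux_exp_lip {a b : ℝ} (ha : 0 ≤ a) (hb : 0 ≤ b) :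
    |Real.exp (-a) - Real.exp (-b)| ≤ |a - b| := by
  rcases le_total a b with h | h
  · have h1 := aux_exp_sub_le ha h
    have h2 : Real.exp (-b) ≤ Real.exp (-a) := Real.exp_le_exp.2 (by linarith)
    rw [abs_of_nonneg (by linarith), abs_of_nonpos (by linarith)]
    linarith
  · have h1 := aux_exp_sub_le hb h
    have h2 : Real.exp (-a) ≤ Real.exp (-b) := Real.exp_le_exp.2 (by linarith)
    rw [abs_of_nonpos (by linarith), abs_of_nonneg (by linarith)]
    linarith

/-- `sqrt` is (1/2)-Lipschitz on `[1, ∞)`. -/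
lemma aux_sqrt_lip {a b : ℝ} (ha : 1 ≤ a) (hb : 1 ≤ b) :
    |Real.sqrt a - Real.sqrt b| ≤ |a - b| / 2 := by
  have ha0 : (0:ℝ) ≤ a := by linarith
  have hb0 : (0:ℝ) ≤ b := by linarith
  have hsa : Real.sqrt a ^ 2 = a := Real.sq_sqrt ha0
  have hsb : Real.sqrt b ^ 2 = b := Real.sq_sqrt hb0
  have h1a : 1 ≤ Real.sqrt a := by
    rw [show (1:ℝ) = Real.sqrt 1 by simp]
    exact Real.sqrt_le_sqrt ha
  have h1b : 1 ≤ Real.sqrt b := by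
    rw [show (1:ℝ) = Real.sqrt 1 by simp]
    exact Real.sqrt_le_sqrt hb
  rcases le_total a b with h | h
  · have hs : Real.sqrt a ≤ Real.sqrt b := Real.sqrt_le_sqrt h
    rw [abs_of_nonpos (by linarith), abs_of_nonpos (by linarith)]
    nlinarith [mul_nonneg (sub_nonneg.2 hs)
      (by linarith : (0:ℝ) ≤ Real.sqrt a + Real.sqrt b - 2)]
  · have hs : Real.sqrt b ≤ Real.sqrt a := Real.sqrt_le_sqrt h
    rw [abs_of_nonneg (by linarith), abs_of_nonneg (by linarith)]
    nlinarith [mul_nonneg (sub_nonneg.2 hs)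
      (by linarith : (0:ℝ) ≤ Real.sqrt a + Real.sqrt b - 2)]

/-- Two-term Cauchy–Schwarz splitting. -/
lemma aux_split (A B C D : ℝ) :
    (A * C - B * D)^2 ≤ 2 * (A * (C - D))^2 + 2 * ((A - B) * D)^2 := by
  nlinarith [sq_nonneg (A * (C - D) - (A - B) * D)]

/-- Splitting `√(w · exp(-u))` as a product. -/
lemma aux_sqrt_exp {w : ℝ} (hw : 0 ≤ w) (u : ℝ) :
    Real.sqrt (w * Real.exp (-u)) = Real.sqrt w * Real.exp (-u / 2) := by
  have h : Real.exp (-u) = Real.exp (-u / 2) * Real.exp (-u / 2) := by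
    rw [← Real.exp_add]; ring_nf
  rw [h, Real.sqrt_mul hw, Real.sqrt_mul_self (Real.exp_nonneg _)]

set_option maxHeartbeats 1000000 in
/-- Under Assumption (W), the posterior measure `μ^y`, with density
`Z(y)⁻¹ exp(-Φ(·;y))` with respect to the prior `μ0`, is locally Lipschitz in the data `y`
with respect to the Hellinger metric: for every `r > 0` there is `c(r) > 0` such that
`d_Hell(μ^y, μ^{y'}) ≤ c(r) * |y - y'|` whenever `|y| ≤ r` and `|y'| ≤ r`. -/
theorem posterior_locally_lipschitz_hellinger
    {X : Type*} [MeasurableSpace X] (μ0 : Measure X) [IsProbabilityMeasure μ0]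
    (m : ℕ) (hm : 1 ≤ m)
    (Φ : X → EuclideanSpace ℝ (Fin m) → ℝ)
    (hΦmeas : ∀ y : EuclideanSpace ℝ (Fin m), Measurable (fun x => Φ x y))
    (hΦnonneg : ∀ x y, 0 ≤ Φ x y)
    -- Assumption (W)(i)
    (hi : ∀ r : ℝ, 0 < r → ∃ (M : ℝ) (Xr : Set X), 0 < M ∧ MeasurableSet Xr ∧ 0 < μ0 Xr ∧
      ∀ x ∈ Xr, ∀ y : EuclideanSpace ℝ (Fin m), ‖y‖ ≤ r → Φ x y ≤ M)
    -- Assumption (W)(ii)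
    (G : ℝ → X → ℝ)
    (hGL2 : ∀ r : ℝ, 0 < r → MemLp (G r) 2 μ0)
    (hii : ∀ r : ℝ, 0 < r → ∀ (x : X) (y y' : EuclideanSpace ℝ (Fin m)),
      ‖y‖ ≤ r → ‖y'‖ ≤ r → |Φ x y - Φ x y'| ≤ G r x * ‖y - y'‖)
    -- the normalization constant
    (Z : EuclideanSpace ℝ (Fin m) → ℝ)
    (hZ : ∀ y, Z y = ∫ x, Real.exp (-Φ x y) ∂μ0)
    -- the Hellinger distance between the posterior measures `μ^y` and `μ^{y'}`
    (dHell : EuclideanSpace ℝ (Fin m) → EuclideanSpace ℝ (Fin m) → ℝ)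
    (hdHell : ∀ y y', dHell y y' = Real.sqrt ((1/2) * ∫ x,
      (Real.sqrt ((Z y)⁻¹ * Real.exp (-Φ x y))
        - Real.sqrt ((Z y')⁻¹ * Real.exp (-Φ x y')))^2 ∂μ0)) :
    ∀ r : ℝ, 0 < r → ∃ c : ℝ, 0 < c ∧
      ∀ y y' : EuclideanSpace ℝ (Fin m), ‖y‖ ≤ r → ‖y'‖ ≤ r →
        dHell y y' ≤ c * ‖y - y'‖ := by
  intro r hr
  obtain ⟨M, Xr, hM0, hXrm, hXrpos, hMbound⟩ := hi r hr
  set ε : ℝ := Real.exp (-M) * (μ0 Xr).toReal with hεdef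
  have hXrReal : 0 < (μ0 Xr).toReal :=
    ENNReal.toReal_pos hXrpos.ne' (measure_ne_top μ0 Xr)
  have hε : 0 < ε := mul_pos (Real.exp_pos _) hXrReal
  -- `G r` is nonnegative
  have hGnn : ∀ x, 0 ≤ G r x := by
    intro x
    have hidx : (0 : ℕ) < m := hm
    set y1 : EuclideanSpace ℝ (Fin m) := EuclideanSpace.single ⟨0, hidx⟩ r with hy1def
    have hy1 : ‖y1‖ = r := by
      rw [hy1def, EuclideanSpace.norm_single, Real.norm_eq_abs, abs_of_pos hr]
    have h0 : ‖(0 : EuclideanSpace ℝ (Fin m))‖ ≤ r := by simp [hr.le]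
    have hkey := hii r hr x 0 y1 h0 (le_of_eq hy1)
    have habs : (0:ℝ) ≤ |Φ x 0 - Φ x y1| := abs_nonneg _
    have hn : ‖(0 : EuclideanSpace ℝ (Fin m)) - y1‖ = r := by
      rw [zero_sub, norm_neg, hy1]
    rw [hn] at hkey
    nlinarith
  -- integrability of the exponential densities
  have hexpint : ∀ y : EuclideanSpace ℝ (Fin m),
      Integrable (fun x => Real.exp (-Φ x y)) μ0 := by
    intro y
    refine Integrable.mono' (integrable_const 1)
      ((hΦmeas y).neg.exp).aestronglyMeasurable ?_
    filter_upwards with x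
    rw [Real.norm_eq_abs, abs_of_pos (Real.exp_pos _)]
    exact Real.exp_le_one_iff.2 (neg_nonpos.2 (hΦnonneg x y))
  -- upper bound on Z
  have hZle1 : ∀ y, Z y ≤ 1 := by
    intro y
    rw [hZ y]
    calc ∫ x, Real.exp (-Φ x y) ∂μ0 ≤ ∫ _x, (1:ℝ) ∂μ0 :=
          integral_mono (hexpint y) (integrable_const 1)
            (fun x => Real.exp_le_one_iff.2 (neg_nonpos.2 (hΦnonneg x y)))
      _ = 1 := by simp
  -- lower bound on Z
  have hZpos : ∀ y : EuclideanSpace ℝ (Fin m), ‖y‖ ≤ r → ε ≤ Z y := by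
    intro y hy
    rw [hZ y]
    have h1 : ε ≤ ∫ x in Xr, Real.exp (-Φ x y) ∂μ0 :=
      le_of_eq_of_le (by rw [hεdef, smul_eq_mul, mul_comm]; rfl) <| setIntegral_ge_of_const_le hXrm (measure_ne_top μ0 Xr)
        (fun x hx => Real.exp_le_exp.2 (neg_le_neg (hMbound x hx y hy)))
        ((hexpint y).integrableOn)
    have h2 : ∫ x in Xr, Real.exp (-Φ x y) ∂μ0 ≤ ∫ x, Real.exp (-Φ x y) ∂μ0 :=
      setIntegral_le_integral (hexpint y) (ae_of_all _ fun x => (Real.exp_pos _).le)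
    linarith
  have hGint : Integrable (G r) μ0 := (hGL2 r hr).integrable one_le_two
  have hG2int : Integrable (fun x => G r x ^ 2) μ0 := (hGL2 r hr).integrable_sq
  set I : ℝ := ∫ x, G r x ∂μ0 with hIdef
  have hI0 : 0 ≤ I := integral_nonneg hGnn
  -- Lipschitz estimate for Z
  have hZlip : ∀ y y' : EuclideanSpace ℝ (Fin m), ‖y‖ ≤ r → ‖y'‖ ≤ r →
      |Z y - Z y'| ≤ I * ‖y - y'‖ := by
    intro y y' hy hy'
    rw [hZ y, hZ y', ← integral_sub (hexpint y) (hexpint y')]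
    calc |∫ x, (Real.exp (-Φ x y) - Real.exp (-Φ x y')) ∂μ0|
        ≤ ∫ x, |Real.exp (-Φ x y) - Real.exp (-Φ x y')| ∂μ0 := by
          simpa [Real.norm_eq_abs] using
            norm_integral_le_integral_norm (μ := μ0)
              (f := fun x => Real.exp (-Φ x y) - Real.exp (-Φ x y'))
      _ ≤ ∫ x, G r x * ‖y - y'‖ ∂μ0 := by
          refine integral_mono ((hexpint y).sub (hexpint y')).abs
            (hGint.mul_const _) (fun x => ?_)
          exact le_trans (aux_exp_lip (hΦnonneg x y) (hΦnonneg x y'))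
            (hii r hr x y y' hy hy')
      _ = I * ‖y - y'‖ := integral_mul_const _ _
  -- the dominating function and its integral
  set B : X → ℝ := fun x => ε⁻¹ / 2 * G r x ^ 2 + (ε⁻¹)^4 * I^2 / 2 with hBdef
  have hBint : Integrable B μ0 := by
    exact (hG2int.const_mul (ε⁻¹ / 2)).add (integrable_const _)
  set K : ℝ := ∫ x, B x ∂μ0 with hKdef
  have hK0 : 0 ≤ K := integral_nonneg fun x => by positivity
  refine ⟨Real.sqrt (K / 2) + 1, by positivity, ?_⟩
  intro y y' hy hy'
  set t : ℝ := ‖y - y'‖ with htdef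
  have ht : 0 ≤ t := norm_nonneg _
  have hZy := hZpos y hy
  have hZy' := hZpos y' hy'
  have hZy0 : 0 < Z y := lt_of_lt_of_le hε hZy
  have hZy'0 : 0 < Z y' := lt_of_lt_of_le hε hZy'
  -- pointwise bound
  have hpoint : ∀ x, (Real.sqrt ((Z y)⁻¹ * Real.exp (-Φ x y))
        - Real.sqrt ((Z y')⁻¹ * Real.exp (-Φ x y')))^2 ≤ B x * t^2 := by
    intro x
    have ha0 : (0:ℝ) < (Z y)⁻¹ := inv_pos.2 hZy0
    have hb0 : (0:ℝ) < (Z y')⁻¹ := inv_pos.2 hZy'0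
    have ha1 : (1:ℝ) ≤ (Z y)⁻¹ := by
      rw [le_inv_comm₀ one_pos hZy0]; simpa using hZle1 y
    have hb1 : (1:ℝ) ≤ (Z y')⁻¹ := by
      rw [le_inv_comm₀ one_pos hZy'0]; simpa using hZle1 y'
    have haε : (Z y)⁻¹ ≤ ε⁻¹ := inv_anti₀ hε hZy
    -- inverse normalization constants are Lipschitz
    have hab : |(Z y)⁻¹ - (Z y')⁻¹| ≤ (ε⁻¹)^2 * (I * t) := by
      have h1 : (Z y)⁻¹ - (Z y')⁻¹ = (Z y' - Z y) / (Z y * Z y') := by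
        field_simp
      rw [h1, abs_div]
      have hden : ε^2 ≤ |Z y * Z y'| := by
        rw [abs_of_pos (mul_pos hZy0 hZy'0)]; nlinarith
      have hnum : |Z y' - Z y| ≤ I * t := by
        rw [abs_sub_comm]; exact hZlip y y' hy hy'
      calc |Z y' - Z y| / |Z y * Z y'| ≤ (I * t) / ε^2 :=
            div_le_div₀ (by positivity) hnum (by positivity) hden
        _ = (ε⁻¹)^2 * (I * t) := by
            rw [div_eq_mul_inv, ← inv_pow]; ring
    rw [aux_sqrt_exp ha0.le, aux_sqrt_exp hb0.le]
    set sa := Real.sqrt (Z y)⁻¹ with hsadef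
    set sb := Real.sqrt (Z y')⁻¹ with hsbdef
    set p := Real.exp (-Φ x y / 2) with hpdef
    set q := Real.exp (-Φ x y' / 2) with hqdef
    have hsab : |sa - sb| ≤ (ε⁻¹)^2 * (I * t) / 2 :=
      le_trans (aux_sqrt_lip ha1 hb1) (by linarith)
    have hpq : |p - q| ≤ G r x * t / 2 := by
      have h1 := aux_exp_lip (by linarith [hΦnonneg x y] : (0:ℝ) ≤ Φ x y / 2)
        (by linarith [hΦnonneg x y'] : (0:ℝ) ≤ Φ x y' / 2)
      have h2 : |Φ x y / 2 - Φ x y' / 2| = |Φ x y - Φ x y'| / 2 := by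
        rw [show Φ x y / 2 - Φ x y' / 2 = (Φ x y - Φ x y') / 2 by ring, abs_div]
        norm_num
      have h3 := hii r hr x y y' hy hy'
      rw [hpdef, hqdef, show -Φ x y / 2 = -(Φ x y / 2) by ring,
        show -Φ x y' / 2 = -(Φ x y' / 2) by ring]
      calc |Real.exp (-(Φ x y / 2)) - Real.exp (-(Φ x y' / 2))|
          ≤ |Φ x y / 2 - Φ x y' / 2| := h1
        _ = |Φ x y - Φ x y'| / 2 := h2
        _ ≤ G r x * t / 2 := by rw [htdef]; linarith
    have hq1 : q ≤ 1 := Real.exp_le_one_iff.2 (by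
      have := hΦnonneg x y'; linarith)
    have hq0 : 0 ≤ q := (Real.exp_pos _).le
    have hp0 : 0 ≤ p := (Real.exp_pos _).le
    have hsa0 : 0 ≤ sa := Real.sqrt_nonneg _
    have hsb0 : 0 ≤ sb := Real.sqrt_nonneg _
    have hsa2 : sa ^ 2 = (Z y)⁻¹ := Real.sq_sqrt ha0.le
    have step1 : (sa * p - sb * q)^2 ≤ 2 * (sa * (p - q))^2 + 2 * ((sa - sb) * q)^2 :=
      aux_split sa sb p q
    have step2 : (sa * (p - q))^2 ≤ ε⁻¹ * (G r x * t / 2)^2 := by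
      have h1 : (sa * (p - q))^2 = (Z y)⁻¹ * (p - q)^2 := by
        rw [mul_pow, hsa2]
      have h2 : (p - q)^2 ≤ (G r x * t / 2)^2 := by
        rw [← sq_abs]
        exact pow_le_pow_left₀ (abs_nonneg _) hpq 2
      rw [h1]
      exact mul_le_mul haε h2 (sq_nonneg _) (by positivity)
    have step3 : ((sa - sb) * q)^2 ≤ ((ε⁻¹)^2 * (I * t) / 2)^2 := by
      have h1 : ((sa - sb) * q)^2 = (sa - sb)^2 * q^2 := by ring
      have h2 : (sa - sb)^2 ≤ ((ε⁻¹)^2 * (I * t) / 2)^2 := by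
        rw [← sq_abs]
        exact pow_le_pow_left₀ (abs_nonneg _) hsab 2
      have h3 : q^2 ≤ 1 := by rw [sq]; exact mul_le_one₀ hq1 hq0 hq1
      calc ((sa - sb) * q)^2 = (sa - sb)^2 * q^2 := h1
        _ ≤ ((ε⁻¹)^2 * (I * t) / 2)^2 * 1 :=
            mul_le_mul h2 h3 (sq_nonneg _) (sq_nonneg _)
        _ = ((ε⁻¹)^2 * (I * t) / 2)^2 := mul_one _
    calc (sa * p - sb * q)^2
        ≤ 2 * (sa * (p - q))^2 + 2 * ((sa - sb) * q)^2 := step1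
      _ ≤ 2 * (ε⁻¹ * (G r x * t / 2)^2) + 2 * ((ε⁻¹)^2 * (I * t) / 2)^2 := by
          linarith [step2, step3]
      _ = B x * t^2 := by rw [hBdef]; ring
  -- integrate the pointwise bound
  have hIntLe : ∫ x, (Real.sqrt ((Z y)⁻¹ * Real.exp (-Φ x y))
        - Real.sqrt ((Z y')⁻¹ * Real.exp (-Φ x y')))^2 ∂μ0 ≤ K * t^2 := by
    calc ∫ x, (Real.sqrt ((Z y)⁻¹ * Real.exp (-Φ x y))
          - Real.sqrt ((Z y')⁻¹ * Real.exp (-Φ x y')))^2 ∂μ0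
        ≤ ∫ x, B x * t^2 ∂μ0 :=
          integral_mono_of_nonneg (ae_of_all _ fun x => sq_nonneg _)
            (hBint.mul_const _) (ae_of_all _ hpoint)
      _ = K * t^2 := integral_mul_const _ _
  rw [hdHell y y']
  calc Real.sqrt ((1/2) * ∫ x, (Real.sqrt ((Z y)⁻¹ * Real.exp (-Φ x y))
        - Real.sqrt ((Z y')⁻¹ * Real.exp (-Φ x y')))^2 ∂μ0)
      ≤ Real.sqrt ((1/2) * (K * t^2)) := Real.sqrt_le_sqrt (by linarith)
    _ = Real.sqrt (K / 2) * t := by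
        rw [show (1/2) * (K * t^2) = (K/2) * t^2 by ring,
          Real.sqrt_mul (by positivity), Real.sqrt_sq ht]
    _ ≤ (Real.sqrt (K / 2) + 1) * t :=
        mul_le_mul_of_nonneg_right (by linarith) ht
end

section
/- For (law of y)-almost every y₀ ∈ ℝ^m, the regular conditional distribution μ^{y₀} of x given y = y₀ is absolutely continuous with respect to μ0, with Radon–Nikodym derivative dμ^{y₀}/dμ0 (x) = Z(y₀)^{-1} exp(−Φ(x; y₀)), where Z(y₀) = ∫_X exp(−Φ(x; y₀)) dμ0(x). -/
open MeasureTheory ProbabilityTheory Real RealInnerProductSpace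

/-- Let `X` be Polish with Borel probability measure `μ0`, `𝒢 : X → ℝ^m`
continuous, `Σ` symmetric positive definite with inverse square root `Q = Σ^{-1/2}`, and on a
probability space let `x` have law `μ0` and `σ ~ N(0, Σ)` (law with Lebesgue density
`((2π)^m det Σ)^{-1/2} exp(-(1/2)|Σ^{-1/2} u|²)`) be independent of `x`; set `y = 𝒢(x) + σ`.
Then for `law(y)`-a.e. `y₀`, the regular conditional distribution of `x` given `y = y₀` is
absolutely continuous with respect to `μ0`, with Radon–Nikodym density
`Z(y₀)⁻¹ exp(-Φ(·; y₀))` where `Φ(a; y₀) = (1/2)|Σ^{-1/2}(y₀ - 𝒢(a))|²` and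
`Z(y₀) = ∫ exp(-Φ(a; y₀)) dμ0(a)`. -/
theorem bayes_formula_condDistrib
    {X : Type*} [MeasurableSpace X] [TopologicalSpace X] [PolishSpace X] [BorelSpace X]
    [Nonempty X]
    (μ0 : Measure X) [IsProbabilityMeasure μ0]
    {Ω : Type*} [MeasurableSpace Ω] (P : Measure Ω) [IsProbabilityMeasure P]
    (m : ℕ) (hm : 1 ≤ m)
    (𝒢 : X → EuclideanSpace ℝ (Fin m)) (h𝒢 : Continuous 𝒢)
    (S Q : EuclideanSpace ℝ (Fin m) →L[ℝ] EuclideanSpace ℝ (Fin m))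
    -- `S` (playing the role of Σ) is symmetric positive definite
    (hSsymm : ∀ v w : EuclideanSpace ℝ (Fin m), ⟪S v, w⟫ = ⟪v, S w⟫)
    (hSpos : ∀ v : EuclideanSpace ℝ (Fin m), v ≠ 0 → 0 < ⟪S v, v⟫)
    -- `Q` is the inverse of the positive-definite square root of `S`
    (hQsymm : ∀ v w : EuclideanSpace ℝ (Fin m), ⟪Q v, w⟫ = ⟪v, Q w⟫)
    (hQpos : ∀ v : EuclideanSpace ℝ (Fin m), v ≠ 0 → 0 < ⟪Q v, v⟫)
    (hQS : Q ∘L S ∘L Q = ContinuousLinearMap.id ℝ (EuclideanSpace ℝ (Fin m)))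
    -- the random element `x` with law `μ0`
    (x : Ω → X) (hx : Measurable x) (hxlaw : P.map x = μ0)
    -- the Gaussian noise `σ ~ N(0, Σ)`, independent of `x`
    (σ : Ω → EuclideanSpace ℝ (Fin m)) (hσ : Measurable σ)
    (hσlaw : P.map σ = volume.withDensity (fun u => ENNReal.ofReal
      (((2 * π) ^ m * LinearMap.det
          (S : EuclideanSpace ℝ (Fin m) →ₗ[ℝ] EuclideanSpace ℝ (Fin m))) ^ (-(1:ℝ)/2)
        * Real.exp (-(1/2) * ‖Q u‖^2))))
    (hindep : IndepFun x σ P)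
    -- the observation
    (y : Ω → EuclideanSpace ℝ (Fin m)) (hy : y = fun ω => 𝒢 (x ω) + σ ω)
    -- the misfit functional and the normalization constant
    (Φ : X → EuclideanSpace ℝ (Fin m) → ℝ)
    (hΦ : ∀ a z, Φ a z = (1/2) * ‖Q (z - 𝒢 a)‖^2)
    (Z : EuclideanSpace ℝ (Fin m) → ℝ)
    (hZ : ∀ z, Z z = ∫ a, Real.exp (-Φ a z) ∂μ0) :
    ∀ᵐ y₀ ∂(P.map y),
      condDistrib x y P y₀ ≪ μ0 ∧
      condDistrib x y P y₀
        = μ0.withDensity (fun a => ENNReal.ofReal ((Z y₀)⁻¹ * Real.exp (-Φ a y₀))) := by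
  classical
  subst hy
  set c : ℝ := ((2 * π) ^ m * LinearMap.det
      (S : EuclideanSpace ℝ (Fin m) →ₗ[ℝ] EuclideanSpace ℝ (Fin m))) ^ (-(1:ℝ)/2) with hc
  -- continuity / measurability of the basic data
  have hΦcont : Continuous (fun p : EuclideanSpace ℝ (Fin m) × X => Φ p.2 p.1) := by
    have heq : (fun p : EuclideanSpace ℝ (Fin m) × X => Φ p.2 p.1)
        = fun p => (1/2 : ℝ) * ‖Q (p.1 - 𝒢 p.2)‖ ^ 2 := funext fun p => hΦ _ _
    rw [heq]
    exact continuous_const.mul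
      ((Q.continuous.comp (continuous_fst.sub (h𝒢.comp continuous_snd))).norm.pow 2)
  have hΦnn : ∀ a z, 0 ≤ Φ a z := fun a z => by rw [hΦ]; positivity
  have hexp_le : ∀ a z, Real.exp (-Φ a z) ≤ 1 := fun a z =>
    (Real.exp_le_exp.mpr (neg_nonpos.mpr (hΦnn a z))).trans_eq Real.exp_zero
  have hymeas : Measurable (fun ω => 𝒢 (x ω) + σ ω) := (h𝒢.measurable.comp hx).add hσ
  have hcontz : ∀ z, Continuous (fun a => Real.exp (-Φ a z)) := fun z =>
    ((hΦcont.comp (Continuous.prodMk_right z)).neg).rexp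
  -- integrability and properties of Z
  have hint : ∀ z, Integrable (fun a => Real.exp (-Φ a z)) μ0 := by
    intro z
    refine (integrable_const (1:ℝ)).mono ((hcontz z).aestronglyMeasurable) ?_
    refine Filter.Eventually.of_forall fun a => ?_
    rw [Real.norm_eq_abs, abs_of_pos (Real.exp_pos _), norm_one]
    exact hexp_le a z
  have hZpos : ∀ z, 0 < Z z := by
    intro z
    rw [hZ]
    rw [integral_pos_iff_support_of_nonneg (fun a => (Real.exp_pos _).le) (hint z)]
    have hsupp : Function.support (fun a : X => Real.exp (-Φ a z)) = Set.univ :=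
      Set.eq_univ_of_forall fun a => (Real.exp_pos _).ne'
    rw [hsupp]
    simp
  have hZof : ∀ z, ENNReal.ofReal (Z z) = ∫⁻ a, ENNReal.ofReal (Real.exp (-Φ a z)) ∂μ0 := by
    intro z; rw [hZ]
    exact ofReal_integral_eq_lintegral_ofReal (hint z)
      (Filter.Eventually.of_forall fun a => (Real.exp_pos _).le)
  have hZmeas : Measurable Z := by
    have heq : Z = fun z => ∫ a, Real.exp (-Φ a z) ∂μ0 := funext hZ
    rw [heq]
    exact (StronglyMeasurable.integral_prod_right'
      (f := fun p : EuclideanSpace ℝ (Fin m) × X => Real.exp (-Φ p.2 p.1))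
      (hΦcont.neg.rexp.stronglyMeasurable)).measurable
  -- positivity of the normalizing constant c
  haveI hσprob : IsProbabilityMeasure (P.map σ) := Measure.isProbabilityMeasure_map hσ.aemeasurable
  have hcpos : 0 < c := by
    by_contra hcle
    push_neg at hcle
    have h0 : (P.map σ) Set.univ = 0 := by
      rw [hσlaw, withDensity_apply _ MeasurableSet.univ, Measure.restrict_univ]
      have hzero : ∀ u : EuclideanSpace ℝ (Fin m),
          ENNReal.ofReal (c * Real.exp (-(1/2) * ‖Q u‖^2)) = 0 := fun u =>
        ENNReal.ofReal_eq_zero.mpr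
          (mul_nonpos_iff.mpr (Or.inr ⟨hcle, (Real.exp_pos _).le⟩))
      rw [lintegral_congr hzero, lintegral_zero]
    rw [measure_univ] at h0
    exact one_ne_zero h0
  -- the density ρ of the noise
  set ρ : EuclideanSpace ℝ (Fin m) → ENNReal :=
    fun u => ENNReal.ofReal (c * Real.exp (-(1/2) * ‖Q u‖ ^ 2)) with hρ
  have hρ_eq : ∀ z a, ρ (z - 𝒢 a) = ENNReal.ofReal (c * Real.exp (-Φ a z)) := by
    intro z a
    have harg : (-(1/2) * ‖Q (z - 𝒢 a)‖ ^ 2 : ℝ) = -(Φ a z) := by rw [hΦ]; ring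
    rw [hρ]
    simp only []
    rw [harg]
  have hρmeas : Measurable ρ := by
    rw [hρ]
    exact (ENNReal.continuous_ofReal.comp (continuous_const.mul
      ((continuous_const.mul (Q.continuous.norm.pow 2)).rexp))).measurable
  -- the candidate kernel
  set κ : Kernel (EuclideanSpace ℝ (Fin m)) X :=
    { toFun := fun z => μ0.withDensity (fun a => ENNReal.ofReal ((Z z)⁻¹ * Real.exp (-Φ a z)))
      measurable' := by
        apply Measure.measurable_of_measurable_coe
        intro s hs
        have hrw : ∀ z : EuclideanSpace ℝ (Fin m),
            μ0.withDensity (fun a => ENNReal.ofReal ((Z z)⁻¹ * Real.exp (-Φ a z))) s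
            = ∫⁻ a, (if a ∈ s then
                ENNReal.ofReal ((Z z)⁻¹ * Real.exp (-Φ a z)) else 0) ∂μ0 := by
          intro z
          rw [withDensity_apply _ hs, ← lintegral_indicator hs]
          exact lintegral_congr fun a => by rw [Set.indicator_apply]
        simp_rw [hrw]
        apply Measurable.lintegral_prod_right'
          (f := fun p : EuclideanSpace ℝ (Fin m) × X =>
            if p.2 ∈ s then ENNReal.ofReal ((Z p.1)⁻¹ * Real.exp (-Φ p.2 p.1)) else 0)
        refine Measurable.ite (measurable_snd hs) ?_ measurable_const
        exact ENNReal.measurable_ofReal.comp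
          (((hZmeas.comp measurable_fst).inv).mul (hΦcont.neg.rexp.measurable)) } with hκdef
  have hκapp : ∀ z, κ z
      = μ0.withDensity (fun a => ENNReal.ofReal ((Z z)⁻¹ * Real.exp (-Φ a z))) := fun z => rfl
  haveI hκMarkov : IsMarkovKernel κ := by
    constructor
    intro z
    constructor
    rw [hκapp z, withDensity_apply _ MeasurableSet.univ, Measure.restrict_univ]
    have h1 : ∀ a, ENNReal.ofReal ((Z z)⁻¹ * Real.exp (-Φ a z))
        = ENNReal.ofReal (Z z)⁻¹ * ENNReal.ofReal (Real.exp (-Φ a z)) := fun a => by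
      rw [ENNReal.ofReal_mul (inv_nonneg.mpr (hZpos z).le)]
    simp_rw [h1]
    rw [lintegral_const_mul _ ((hcontz z).measurable.ennreal_ofReal),
      ← hZof z, ← ENNReal.ofReal_mul (inv_nonneg.mpr (hZpos z).le),
      inv_mul_cancel₀ (hZpos z).ne', ENNReal.ofReal_one]
  -- joint law of (x, σ)
  have hmapxσ : P.map (fun ω => (x ω, σ ω)) = μ0.prod (P.map σ) := by
    have h := (indepFun_iff_map_prod_eq_prod_map_map hx.aemeasurable hσ.aemeasurable).mp hindep
    rw [hxlaw] at h
    exact h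
  set g : X × EuclideanSpace ℝ (Fin m) → EuclideanSpace ℝ (Fin m) × X :=
    fun p => (𝒢 p.1 + p.2, p.1) with hgdef
  have hg : Measurable g :=
    ((h𝒢.measurable.comp measurable_fst).add measurable_snd).prodMk measurable_fst
  have hjoint : P.map (fun ω => (𝒢 (x ω) + σ ω, x ω)) = (μ0.prod (P.map σ)).map g := by
    have hco : (fun ω => (𝒢 (x ω) + σ ω, x ω)) = g ∘ (fun ω => (x ω, σ ω)) := rfl
    rw [hco, ← Measure.map_map hg (hx.prodMk hσ), hmapxσ]
  -- translation invariance computation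
  have htrans : ∀ (a : X) (A : Set (EuclideanSpace ℝ (Fin m))), MeasurableSet A →
      (P.map σ) ((fun u => 𝒢 a + u) ⁻¹' A) = ∫⁻ z in A, ρ (z - 𝒢 a) ∂volume := by
    intro a A hA
    have hpm : MeasurableSet ((fun u => 𝒢 a + u) ⁻¹' A) :=
      hA.preimage (measurable_id.const_add (𝒢 a))
    rw [hσlaw]
    have hρν : (volume.withDensity (fun u : EuclideanSpace ℝ (Fin m) => ENNReal.ofReal
        (c * Real.exp (-(1/2) * ‖Q u‖^2)))) = volume.withDensity ρ := rfl
    rw [hρν, withDensity_apply _ hpm, ← lintegral_indicator hpm, ← lintegral_indicator hA]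
    have hswap := lintegral_add_left_eq_self
      (μ := (volume : Measure (EuclideanSpace ℝ (Fin m))))
      (fun z => A.indicator (fun z => ρ (z - 𝒢 a)) z) (𝒢 a)
    rw [← hswap]
    refine lintegral_congr fun u => ?_
    by_cases hu : 𝒢 a + u ∈ A
    · simp [Set.indicator_apply, hu, Set.mem_preimage, add_sub_cancel_left]
    · simp [Set.indicator_apply, hu, Set.mem_preimage]
  -- the key rectangle formula for the joint law
  have hkey : ∀ (A : Set (EuclideanSpace ℝ (Fin m))) (B : Set X),
      MeasurableSet A → MeasurableSet B →
      ((μ0.prod (P.map σ)).map g) (A ×ˢ B)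
        = ∫⁻ a in B, ∫⁻ z in A, ρ (z - 𝒢 a) ∂volume ∂μ0 := by
    intro A B hA hB
    rw [Measure.map_apply hg (hA.prod hB), Measure.prod_apply (hg (hA.prod hB)),
      ← lintegral_indicator hB]
    refine lintegral_congr fun a => ?_
    have hpre : Prod.mk a ⁻¹' (g ⁻¹' (A ×ˢ B))
        = if a ∈ B then (fun u => 𝒢 a + u) ⁻¹' A else ∅ := by
      by_cases ha : a ∈ B <;> ext u <;>
        simp [hgdef, Set.mem_preimage, Set.mem_prod, ha]
    rw [hpre, Set.indicator_apply]
    by_cases ha : a ∈ B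
    · simp only [ha, if_true]
      exact htrans a A hA
    · simp [ha]
  -- the law of y
  set μy := P.map (fun ω => 𝒢 (x ω) + σ ω) with hμydef
  haveI : IsProbabilityMeasure μy := Measure.isProbabilityMeasure_map hymeas.aemeasurable
  have hjmeas : Measurable
      (fun p : X × EuclideanSpace ℝ (Fin m) => ρ (p.2 - 𝒢 p.1)) :=
    hρmeas.comp (measurable_snd.sub (h𝒢.measurable.comp measurable_fst))
  have hjmeas' : Measurable
      (fun p : EuclideanSpace ℝ (Fin m) × X => ρ (p.1 - 𝒢 p.2)) :=
    hρmeas.comp (measurable_fst.sub (h𝒢.measurable.comp measurable_snd))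
  have hinner : ∀ z, ∫⁻ a, ρ (z - 𝒢 a) ∂μ0 = ENNReal.ofReal (c * Z z) := by
    intro z
    have h2 : ∀ a, ρ (z - 𝒢 a)
        = ENNReal.ofReal c * ENNReal.ofReal (Real.exp (-Φ a z)) := fun a => by
      rw [hρ_eq z a, ENNReal.ofReal_mul hcpos.le]
    simp_rw [h2]
    rw [lintegral_const_mul _ ((hcontz z).measurable.ennreal_ofReal),
      ← hZof z, ← ENNReal.ofReal_mul hcpos.le]
  have hμyA : ∀ A : Set (EuclideanSpace ℝ (Fin m)), MeasurableSet A →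
      μy A = ∫⁻ z in A, ENNReal.ofReal (c * Z z) ∂volume := by
    intro A hA
    have h1 : μy A = ((μ0.prod (P.map σ)).map g) (A ×ˢ Set.univ) := by
      rw [hμydef, ← hjoint, Measure.map_apply hymeas hA,
        Measure.map_apply (hymeas.prodMk hx) (hA.prod MeasurableSet.univ)]
      congr 1
      ext ω
      simp
    rw [h1, hkey A Set.univ hA MeasurableSet.univ, Measure.restrict_univ]
    rw [lintegral_lintegral_swap (hjmeas.aemeasurable)]
    exact lintegral_congr fun z => hinner z
  have hμyd : μy = volume.withDensity (fun z => ENNReal.ofReal (c * Z z)) := by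
    ext s hs
    rw [hμyA s hs, withDensity_apply _ hs]
  -- rectangle formula for the compProd
  have hDmeas : Measurable (fun z => ENNReal.ofReal (c * Z z)) :=
    ENNReal.measurable_ofReal.comp (measurable_const.mul hZmeas)
  have hcomp : ∀ (A : Set (EuclideanSpace ℝ (Fin m))) (B : Set X),
      MeasurableSet A → MeasurableSet B →
      (μy ⊗ₘ κ) (A ×ˢ B) = ∫⁻ a in B, ∫⁻ z in A, ρ (z - 𝒢 a) ∂volume ∂μ0 := by
    intro A B hA hB
    rw [Measure.compProd_apply_prod hA hB, hμyd, restrict_withDensity hA,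
      lintegral_withDensity_eq_lintegral_mul _ hDmeas (κ.measurable_coe hB)]
    have hpt : ∀ z, ENNReal.ofReal (c * Z z) * κ z B = ∫⁻ a in B, ρ (z - 𝒢 a) ∂μ0 := by
      intro z
      rw [hκapp z, withDensity_apply _ hB,
        ← lintegral_const_mul _ (Measurable.ennreal_ofReal (f := fun a => (Z z)⁻¹ * Real.exp (-Φ a z))
          (measurable_const.mul (hcontz z).measurable))]
      refine lintegral_congr fun a => ?_
      rw [hρ_eq z a, ← ENNReal.ofReal_mul (mul_nonneg hcpos.le (hZpos z).le)]
      congr 1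
      field_simp [(hZpos z).ne']
    have hx1 : ∫⁻ z in A, (fun z => ENNReal.ofReal (c * Z z)) z * κ z B ∂volume
        = ∫⁻ z in A, ∫⁻ a in B, ρ (z - 𝒢 a) ∂μ0 ∂volume :=
      lintegral_congr fun z => hpt z
    calc ∫⁻ z in A, ((fun z => ENNReal.ofReal (c * Z z)) * fun z => κ z B) z ∂volume
        = ∫⁻ z in A, ∫⁻ a in B, ρ (z - 𝒢 a) ∂μ0 ∂volume := by
          simpa [Pi.mul_apply] using hx1
      _ = ∫⁻ a in B, ∫⁻ z in A, ρ (z - 𝒢 a) ∂volume ∂μ0 :=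
          lintegral_lintegral_swap (hjmeas'.aemeasurable)
  -- the compProd identity
  have hcompprod : P.map (fun ω => (𝒢 (x ω) + σ ω, x ω)) = μy ⊗ₘ κ := by
    haveI : IsProbabilityMeasure (P.map (fun ω => (𝒢 (x ω) + σ ω, x ω))) :=
      Measure.isProbabilityMeasure_map (hymeas.prodMk hx).aemeasurable
    refine ext_of_generate_finite _ generateFrom_prod.symm isPiSystem_prod ?_ ?_
    · rintro s ⟨A, hA, B, hB, rfl⟩
      rw [hjoint, hkey A B hA hB, hcomp A B hA hB]
    · simp [measure_univ]
  -- conclude via the a.e. uniqueness of condDistrib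
  have hfinal := condDistrib_ae_eq_of_measure_eq_compProd_of_measurable hymeas hx hcompprod
  filter_upwards [hfinal] with z hzeq
  constructor
  · rw [hzeq, hκapp z]
    exact withDensity_absolutelyContinuous _ _
  · rw [hzeq, hκapp z]
end

section
/- There exists a constant c > 0, depending only on C₀, C₁, |b| and t − s, such that for every absolutely continuous curve γ : [s,t] → ℝ^d one has A^{W,b}_{s,t}(γ) ≥ −c·( 1 + max_{s ≤ τ ≤ t} |W(τ) − W(t)|² ). -/
open MeasureTheory Set Real RealInnerProductSpace

/-- `γ : [s,t] → ℝ^d` is absolutely continuous with (integrable) derivative `γ'`: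
`γ τ = γ s + ∫_s^τ γ' u du` for all `τ ∈ [s,t]`. -/
def IsACWith {d : ℕ} (γ γ' : ℝ → EuclideanSpace ℝ (Fin d)) (s t : ℝ) : Prop :=
  IntervalIntegrable γ' volume s t ∧
    ∀ τ ∈ Set.Icc s t, γ τ = γ s + ∫ u in s..τ, γ' u

/-- The action `A^{W,b}_{s,t}(γ) = ∫_s^t ((1/2)|γ̇ - b|² + ∇F(γ)·γ̇ (W(τ) - W(t)) - (1/2)|b|²) dτ
- F(γ(s)) (W(t) - W(s))`, expressed via the pair `(γ, γ')`. -/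
noncomputable def actionB {d : ℕ} (F : EuclideanSpace ℝ (Fin d) → ℝ) (W : ℝ → ℝ)
    (b : EuclideanSpace ℝ (Fin d)) (γ γ' : ℝ → EuclideanSpace ℝ (Fin d)) (s t : ℝ) : ℝ :=
  (∫ τ in s..t, ((1/2) * ‖γ' τ - b‖^2
      + ⟪gradient F (γ τ), γ' τ⟫ * (W τ - W t) - (1/2) * ‖b‖^2))
    - F (γ s) * (W t - W s)

/-- `max_{s ≤ τ ≤ t} |W(τ) - W(t)|`. -/
noncomputable def maxW (W : ℝ → ℝ) (s t : ℝ) : ℝ :=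
  sSup ((fun τ => |W τ - W t|) '' Set.Icc s t)

/-- `v ∈ ℤ^d`. -/
def IsIntVec {d : ℕ} (v : EuclideanSpace ℝ (Fin d)) : Prop :=
  ∀ i, ∃ k : ℤ, v i = (k : ℝ)

/-- There is a constant `c > 0` depending only on `C₀, C₁, |b|` and `t - s`
such that every absolutely continuous curve `γ : [s,t] → ℝ^d` satisfies
`A^{W,b}_{s,t}(γ) ≥ -c (1 + max_{s ≤ τ ≤ t} |W(τ) - W(t)|²)`. -/
theorem action_lower_bound_periodic (C₀ C₁ B T : ℝ) :
    ∃ c : ℝ, 0 < c ∧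
      ∀ (d : ℕ), 1 ≤ d →
      ∀ b : EuclideanSpace ℝ (Fin d), ‖b‖ = B →
      ∀ s t : ℝ, s < t → t - s = T →
      ∀ F : EuclideanSpace ℝ (Fin d) → ℝ, ContDiff ℝ 1 F →
        (∀ x, |F x| ≤ C₀) → (∀ x, ‖gradient F x‖ ≤ C₁) →
      ∀ W : ℝ → ℝ, Continuous W →
      ∀ γ γ' : ℝ → EuclideanSpace ℝ (Fin d), IsACWith γ γ' s t →
        -c * (1 + (maxW W s t)^2) ≤ actionB F W b γ γ' s t := by
  refine ⟨|T| * (C₁^2 + B^2) + |C₀| + 1, by positivity, ?_⟩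
  intro d hd b hB s t hst hT F hF hF0 hF1 W hW γ γ' hac
  set M := maxW W s t with hMdef
  have hbdd : BddAbove ((fun τ => |W τ - W t|) '' Set.Icc s t) :=
    (isCompact_Icc.image (continuous_abs.comp (hW.sub continuous_const))).bddAbove
  have hMle : ∀ τ ∈ Set.Icc s t, |W τ - W t| ≤ M := fun τ hτ =>
    le_csSup hbdd (Set.mem_image_of_mem _ hτ)
  have hM0 : 0 ≤ M :=
    le_trans (abs_nonneg _) (hMle s ⟨le_refl s, hst.le⟩)
  have hB0 : 0 ≤ B := hB ▸ norm_nonneg b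
  have hC00 : 0 ≤ C₀ := le_trans (abs_nonneg _) (hF0 0)
  have hC10 : 0 ≤ C₁ := le_trans (norm_nonneg _) (hF1 0)
  have hT0 : 0 < T := hT ▸ (by linarith)
  -- pointwise lower bound on the integrand
  set K : ℝ := (1/2) * (C₁ * M + B)^2 with hK
  have hK0 : 0 ≤ K := by positivity
  have hpt : ∀ τ ∈ Set.Icc s t,
      -K ≤ (1/2) * ‖γ' τ - b‖^2
        + ⟪gradient F (γ τ), γ' τ⟫ * (W τ - W t) - (1/2) * ‖b‖^2 := by
    intro τ hτ
    set y := ‖γ' τ - b‖ with hy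
    set n := ‖γ' τ‖ with hn
    have hy0 : 0 ≤ y := norm_nonneg _
    have hn0 : 0 ≤ n := norm_nonneg _
    have hny : n ≤ y + B := by
      have := norm_sub_norm_le (γ' τ) b
      rw [← hB]; rw [hn, hy]
      have h2 := norm_le_norm_add_norm_sub' (γ' τ) b
      linarith [norm_le_insert' (γ' τ) b]
    have hip : |⟪gradient F (γ τ), γ' τ⟫| ≤ C₁ * n := by
      calc |⟪gradient F (γ τ), γ' τ⟫| ≤ ‖gradient F (γ τ)‖ * ‖γ' τ‖ :=
            abs_real_inner_le_norm _ _
        _ ≤ C₁ * n := by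
            exact mul_le_mul_of_nonneg_right (hF1 _) hn0
    have hw : |W τ - W t| ≤ M := hMle τ hτ
    have hlow : -(C₁ * n * M) ≤ ⟪gradient F (γ τ), γ' τ⟫ * (W τ - W t) := by
      have h1 : |⟪gradient F (γ τ), γ' τ⟫ * (W τ - W t)| ≤ (C₁ * n) * M := by
        rw [abs_mul]
        exact mul_le_mul hip hw (abs_nonneg _) (by positivity)
      have := neg_abs_le (⟪gradient F (γ τ), γ' τ⟫ * (W τ - W t))
      linarith
    have hbn : ‖b‖ = B := hB
    rw [hbn]
    nlinarith [sq_nonneg (y - C₁ * M), mul_le_mul_of_nonneg_right hny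
      (mul_nonneg hC10 hM0), sq_nonneg (C₁ * M + B)]
  -- bound the integral
  have hInt : -(K * (t - s)) ≤ ∫ τ in s..t, ((1/2) * ‖γ' τ - b‖^2
      + ⟪gradient F (γ τ), γ' τ⟫ * (W τ - W t) - (1/2) * ‖b‖^2) := by
    by_cases hig : IntervalIntegrable (fun τ => (1/2) * ‖γ' τ - b‖^2
        + ⟪gradient F (γ τ), γ' τ⟫ * (W τ - W t) - (1/2) * ‖b‖^2) volume s t
    · have := intervalIntegral.integral_mono_on hst.le
        (intervalIntegrable_const (c := -K)) hig hpt
      refine le_trans (le_of_eq ?_) this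
      rw [intervalIntegral.integral_const, hK, smul_eq_mul]; ring
    · rw [intervalIntegral.integral_undef hig]
      nlinarith
  have hFs : -(C₀ * M) ≤ -(F (γ s) * (W t - W s)) := by
    have h1 : |F (γ s) * (W t - W s)| ≤ C₀ * M := by
      rw [abs_mul]
      have h2 : |W t - W s| = |W s - W t| := abs_sub_comm _ _
      rw [h2]
      exact mul_le_mul (hF0 _) (hMle s ⟨le_refl s, hst.le⟩) (abs_nonneg _) hC00
    have := le_abs_self (F (γ s) * (W t - W s))
    linarith
  rw [actionB]
  have habsT : |T| = T := abs_of_pos hT0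
  have habsC0 : |C₀| = C₀ := abs_of_nonneg hC00
  have hts : t - s = T := hT
  have key : -((|T| * (C₁^2 + B^2) + |C₀| + 1) * (1 + M^2))
      ≤ -(K * (t - s)) - C₀ * M := by
    rw [habsT, habsC0, hts, hK]
    nlinarith [mul_nonneg hT0.le (sq_nonneg (C₁ * M - B)),
      mul_nonneg hC00 (sq_nonneg (M - 1)), sq_nonneg M,
      mul_nonneg hT0.le (sq_nonneg C₁), mul_nonneg hT0.le (sq_nonneg B),
      mul_nonneg (mul_nonneg hT0.le (sq_nonneg B)) (sq_nonneg M)]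
  linarith [hInt, hFs, key]
end

section
/- Let t ∈ ℝ and let γ : [t−1, t] → ℝ^d be a continuously differentiable curve that minimizes A^{W,b}_{t−1,t} with fixed endpoints modulo ℤ^d and satisfies, for every s ∈ [t−1, t], the Euler–Lagrange identity γ̇(t) = γ̇(s) + ∫_s^t ∇²F(γ(τ)) γ̇(τ) (W(τ) − W(t)) dτ + ∇F(γ(s))·(W(s) − W(t)). Then there is a constant c > 0, depending only on d, |b|, C₀, C₁ and C₂, such that |γ̇(t)| ≤ c·( 1 + max_{t−1 ≤ τ ≤ t} |W(τ) − W(t)|² ). -/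
open MeasureTheory Set Real RealInnerProductSpace

/-- Auxiliary: continuity on a closed interval gives interval integrability. -/
lemma contOn_intInt {E : Type*} [NormedAddCommGroup E] {f : ℝ → E} {a b : ℝ} (hab : a ≤ b)
    (h : ContinuousOn f (Set.Icc a b)) : IntervalIntegrable f volume a b := by
  apply ContinuousOn.intervalIntegrable
  rwa [Set.uIcc_of_le hab]
set_option maxHeartbeats 2000000 in
/-- If `γ : [t-1, t] → ℝ^d` is a continuously differentiable minimizer of
`A^{W,b}_{t-1,t}` with fixed endpoints modulo `ℤ^d` satisfying the Euler–Lagrange identity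
`γ̇(t) = γ̇(s) + ∫_s^t ∇²F(γ(τ)) γ̇(τ) (W(τ) - W(t)) dτ + ∇F(γ(s)) (W(s) - W(t))`
for all `s ∈ [t-1, t]`, then `|γ̇(t)| ≤ c (1 + max_{t-1 ≤ τ ≤ t} |W(τ) - W(t)|²)` for
a constant `c > 0` depending only on `d, |b|, C₀, C₁, C₂`. -/
theorem minimizer_endpoint_velocity_bound_periodic (d : ℕ) (hd : 1 ≤ d) (C₀ C₁ C₂ B : ℝ) :
    ∃ c : ℝ, 0 < c ∧
      ∀ b : EuclideanSpace ℝ (Fin d), ‖b‖ = B →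
      ∀ F : EuclideanSpace ℝ (Fin d) → ℝ, ContDiff ℝ 2 F →
        (∀ (x v : EuclideanSpace ℝ (Fin d)), IsIntVec v → F (x + v) = F x) →
        (∀ x, |F x| ≤ C₀) → (∀ x, ‖gradient F x‖ ≤ C₁) →
        (∀ x, ‖fderiv ℝ (gradient F) x‖ ≤ C₂) →
      ∀ W : ℝ → ℝ, Continuous W →
      ∀ t : ℝ, ∀ γ γ' : ℝ → EuclideanSpace ℝ (Fin d),
        IsACWith γ γ' (t-1) t →
        ContinuousOn γ' (Set.Icc (t-1) t) →
        -- `γ` minimizes the action with fixed endpoints modulo `ℤ^d`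
        (∀ σ σ' : ℝ → EuclideanSpace ℝ (Fin d), IsACWith σ σ' (t-1) t →
          IsIntVec (σ (t-1) - γ (t-1)) → IsIntVec (σ t - γ t) →
          actionB F W b γ γ' (t-1) t ≤ actionB F W b σ σ' (t-1) t) →
        -- the Euler–Lagrange identity
        (∀ s ∈ Set.Icc (t-1) t,
          γ' t = γ' s + (∫ τ in s..t, (W τ - W t) • fderiv ℝ (gradient F) (γ τ) (γ' τ))
            + (W s - W t) • gradient F (γ s)) →
        ‖γ' t‖ ≤ c * (1 + (maxW W (t-1) t)^2) := by

  refine ⟨100 * (1 + |B| + |C₀| + |C₁| + |C₂| + (d:ℝ))^2, by positivity, ?_⟩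
  intro b hb F hF hper hF0 hF1 hF2 W hW t γ γ' hAC hγ'c hmin hEL
  obtain ⟨A, hAdef⟩ : ∃ A : ℝ, A = 1 + |B| + |C₀| + |C₁| + |C₂| + (d:ℝ) := ⟨_, rfl⟩
  obtain ⟨M, hMdef⟩ : ∃ M : ℝ, M = maxW W (t-1) t := ⟨_, rfl⟩
  have hab : t - 1 ≤ t := by linarith
  have habs : ∀ x : ℝ, 0 ≤ |x| := fun x => abs_nonneg x
  have hA1 : (1:ℝ) ≤ A := by
    have h0 : (1:ℝ) ≤ (d:ℝ) := by exact_mod_cast hd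
    simp only [hAdef]
    linarith [habs B, habs C₀, habs C₁, habs C₂]
  have hA0 : (0:ℝ) < A := by linarith
  have hdA : (d:ℝ) ≤ A := by
    simp only [hAdef]; linarith [habs B, habs C₀, habs C₁, habs C₂]
  have hbA : ‖b‖ ≤ A := by
    rw [hb]; simp only [hAdef]
    have h0 : (0:ℝ) ≤ (d:ℝ) := Nat.cast_nonneg d
    linarith [le_abs_self B, habs C₀, habs C₁, habs C₂]
  have hF0A : ∀ x, |F x| ≤ A := by
    intro x
    refine (hF0 x).trans ?_
    have h0 : (0:ℝ) ≤ (d:ℝ) := Nat.cast_nonneg d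
    simp only [hAdef]; linarith [le_abs_self C₀, habs B, habs C₁, habs C₂]
  have hF1A : ∀ x, ‖gradient F x‖ ≤ A := by
    intro x
    refine (hF1 x).trans ?_
    have h0 : (0:ℝ) ≤ (d:ℝ) := Nat.cast_nonneg d
    simp only [hAdef]; linarith [le_abs_self C₁, habs B, habs C₀, habs C₂]
  have hF2A : ∀ x, ‖fderiv ℝ (gradient F) x‖ ≤ A := by
    intro x
    refine (hF2 x).trans ?_
    have h0 : (0:ℝ) ≤ (d:ℝ) := Nat.cast_nonneg d
    simp only [hAdef]; linarith [le_abs_self C₂, habs B, habs C₀, habs C₁]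
  -- properties of M
  have hWc : Continuous fun τ => |W τ - W t| := (hW.sub continuous_const).abs
  have hMb : ∀ τ ∈ Icc (t-1) t, |W τ - W t| ≤ M := by
    intro τ hτ
    rw [hMdef]
    exact le_csSup ((isCompact_Icc.image hWc).bddAbove)
      (Set.mem_image_of_mem _ hτ)
  have hM0 : 0 ≤ M := by
    have := hMb t ⟨hab, le_refl t⟩
    simpa using this
  -- continuity facts
  have hgrad1 : ContDiff ℝ 1 (gradient F) := by
    unfold gradient
    exact (InnerProductSpace.toDual ℝ _).symm.contDiff.comp (hF.fderiv_right (by norm_num))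
  have hgFc : Continuous (gradient F) := hgrad1.continuous
  have hHessc : Continuous (fderiv ℝ (gradient F)) := hgrad1.continuous_fderiv one_ne_zero
  have hγc : ContinuousOn γ (Icc (t-1) t) := by
    have h2 : ContinuousOn (fun τ => ∫ u in (t-1)..τ, γ' u) (uIcc (t-1) t) := by
      apply intervalIntegral.continuousOn_primitive_interval
      rw [uIcc_of_le hab]
      exact (intervalIntegrable_iff_integrableOn_Icc_of_le hab).mp hAC.1
    rw [uIcc_of_le hab] at h2
    exact (continuousOn_const.add h2).congr fun τ hτ => hAC.2 τ hτ
  -- integrability of basic functions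
  have hInt_norm : IntervalIntegrable (fun τ => ‖γ' τ‖) volume (t-1) t :=
    contOn_intInt hab hγ'c.norm
  have hInt_norm2 : IntervalIntegrable (fun τ => ‖γ' τ‖^2) volume (t-1) t :=
    contOn_intInt hab (hγ'c.norm.pow 2)
  obtain ⟨E, hEdef⟩ : ∃ E : ℝ, E = ∫ τ in (t-1)..t, ‖γ' τ‖^2 := ⟨_, rfl⟩
  obtain ⟨L, hLdef⟩ : ∃ L : ℝ, L = ∫ τ in (t-1)..t, ‖γ' τ‖ := ⟨_, rfl⟩
  have hE0 : 0 ≤ E := by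
    rw [hEdef]; exact intervalIntegral.integral_nonneg hab (fun u _ => by positivity)
  have hL0 : 0 ≤ L := by
    rw [hLdef]; exact intervalIntegral.integral_nonneg hab (fun u _ => norm_nonneg _)
  -- the comparison curve σ
  obtain ⟨k, hk⟩ : ∃ k : EuclideanSpace ℝ (Fin d),
      k = (fun i => (round ((γ t - γ (t-1)) i) : ℝ)) := ⟨WithLp.toLp 2 _, rfl⟩
  obtain ⟨v, hv⟩ : ∃ v : EuclideanSpace ℝ (Fin d), v = γ t - γ (t-1) - k := ⟨_, rfl⟩
  have happ : ∀ (x y : EuclideanSpace ℝ (Fin d)) i, (x - y) i = x i - y i := fun x y i => rfl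
  have hadd : ∀ (x y : EuclideanSpace ℝ (Fin d)) i, (x + y) i = x i + y i := fun x y i => rfl
  have hvi : ∀ i, |v i| ≤ 1/2 := by
    intro i
    rw [hv, happ, hk]
    exact abs_sub_round _
  have hvA : ‖v‖ ≤ A := by
    have h1 : ‖v‖^2 ≤ (d:ℝ) * (1/2)^2 := by
      rw [EuclideanSpace.norm_eq, Real.sq_sqrt (by positivity)]
      calc ∑ i, ‖v i‖^2 ≤ ∑ _i : Fin d, ((1:ℝ)/2)^2 := by
            apply Finset.sum_le_sum
            intro i _
            have := hvi i
            rw [Real.norm_eq_abs]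
            nlinarith [abs_nonneg (v i)]
        _ = (d:ℝ) * (1/2)^2 := by simp
    nlinarith [norm_nonneg v]
  obtain ⟨σ, hσ⟩ : ∃ σ : ℝ → EuclideanSpace ℝ (Fin d),
      σ = fun τ => γ (t-1) + (τ - (t-1)) • v := ⟨_, rfl⟩
  have hACσ : IsACWith σ (fun _ => v) (t-1) t := by
    constructor
    · exact intervalIntegrable_const
    · intro τ hτ
      simp only [hσ]
      rw [intervalIntegral.integral_const, sub_self, zero_smul, add_zero]
  have hsm : ∀ (c:ℝ) (x : EuclideanSpace ℝ (Fin d)) i, (c • x) i = c * x i := fun c x i => rfl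
  have hint0 : IsIntVec (σ (t-1) - γ (t-1)) := by
    intro i
    refine ⟨0, ?_⟩
    have hσ0 : σ (t-1) = γ (t-1) + ((t-1) - (t-1)) • v := by rw [hσ]
    rw [happ, hσ0, hadd, hsm]
    push_cast
    ring
  have hint1 : IsIntVec (σ t - γ t) := by
    intro i
    refine ⟨-(round ((γ t - γ (t-1)) i)), ?_⟩
    have h1 : (t - (t-1)) = 1 := by ring
    have hσt : σ t = γ (t-1) + (t - (t-1)) • v := by rw [hσ]
    have hki : k i = (round ((γ t - γ (t-1)) i) : ℝ) := by rw [hk]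
    rw [happ, hσt, hadd, hsm, h1, one_mul, hv, happ, happ, hki, happ (γ t) (γ (t-1))]
    push_cast
    ring
  have hcomp := hmin σ (fun _ => v) hACσ hint0 hint1
  -- upper bound for the action of σ
  have hσc : ContinuousOn σ (Icc (t-1) t) := by
    rw [hσ]
    exact (continuous_const.add
      ((continuous_id.sub continuous_const).smul continuous_const)).continuousOn
  have hσint : IntervalIntegrable (fun τ => (1/2) * ‖(fun _ : ℝ => v) τ - b‖^2
      + ⟪gradient F (σ τ), (fun _ : ℝ => v) τ⟫ * (W τ - W t) - (1/2) * ‖b‖^2) volume (t-1) t := by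
    apply contOn_intInt hab
    apply ContinuousOn.sub ?_ continuousOn_const
    apply ContinuousOn.add continuousOn_const
    exact ((hgFc.comp_continuousOn hσc).inner continuousOn_const).mul
      ((hW.sub continuous_const).continuousOn)
  have hσbound : actionB F W b σ (fun _ => v) (t-1) t ≤ 2*A^2 + A^2*M + A*M := by
    have hptσ : ∀ τ ∈ Icc (t-1) t, (1/2) * ‖(fun _ : ℝ => v) τ - b‖^2
        + ⟪gradient F (σ τ), (fun _ : ℝ => v) τ⟫ * (W τ - W t) - (1/2) * ‖b‖^2
        ≤ 2*A^2 + A^2*M := by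
      intro τ hτ
      have h1 : ‖v - b‖ ≤ 2*A := by
        calc ‖v - b‖ ≤ ‖v‖ + ‖b‖ := norm_sub_le _ _
          _ ≤ 2*A := by linarith
      have h2 : |⟪gradient F (σ τ), v⟫ * (W τ - W t)| ≤ A^2 * M := by
        rw [abs_mul]
        have h3 : |⟪gradient F (σ τ), v⟫| ≤ A * A := by
          calc |⟪gradient F (σ τ), v⟫| ≤ ‖gradient F (σ τ)‖ * ‖v‖ := abs_real_inner_le_norm _ _
            _ ≤ A * A := mul_le_mul (hF1A _) hvA (norm_nonneg _) (le_of_lt hA0)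
        calc |⟪gradient F (σ τ), v⟫| * |W τ - W t| ≤ (A*A) * M :=
              mul_le_mul h3 (hMb τ hτ) (abs_nonneg _) (by positivity)
          _ = A^2 * M := by ring
      have h2' := (abs_le.mp h2).2
      have h4 : ‖v - b‖^2 ≤ (2*A)^2 := by
        nlinarith [norm_nonneg (v - b)]
      simp only
      nlinarith [sq_nonneg ‖b‖]
    have hFterm : -(F (σ (t-1)) * (W t - W (t-1))) ≤ A * M := by
      have h5 : |F (σ (t-1)) * (W t - W (t-1))| ≤ A * M := by
        rw [abs_mul, abs_sub_comm]
        exact mul_le_mul (hF0A _) (hMb (t-1) ⟨le_refl _, hab⟩) (abs_nonneg _) (le_of_lt hA0)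
      linarith [(abs_le.mp h5).1]
    have hIσ : (∫ τ in (t-1)..t, ((1/2) * ‖(fun _ : ℝ => v) τ - b‖^2
        + ⟪gradient F (σ τ), (fun _ : ℝ => v) τ⟫ * (W τ - W t) - (1/2) * ‖b‖^2))
        ≤ 2*A^2 + A^2*M := by
      calc (∫ τ in (t-1)..t, ((1/2) * ‖(fun _ : ℝ => v) τ - b‖^2
          + ⟪gradient F (σ τ), (fun _ : ℝ => v) τ⟫ * (W τ - W t) - (1/2) * ‖b‖^2))
          ≤ ∫ _τ in (t-1)..t, (2*A^2 + A^2*M) :=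
            intervalIntegral.integral_mono_on hab hσint intervalIntegrable_const hptσ
        _ = 2*A^2 + A^2*M := by
            rw [intervalIntegral.integral_const]
            rw [show t - (t-1) = 1 by ring, one_smul]
    unfold actionB
    linarith
  -- lower bound for the action of γ
  have hγint : IntervalIntegrable (fun τ => (1/2) * ‖γ' τ - b‖^2
      + ⟪gradient F (γ τ), γ' τ⟫ * (W τ - W t) - (1/2) * ‖b‖^2) volume (t-1) t := by
    apply contOn_intInt hab
    apply ContinuousOn.sub ?_ continuousOn_const
    apply ContinuousOn.add
    · exact continuousOn_const.mul ((hγ'c.sub continuousOn_const).norm.pow 2)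
    · exact ((hgFc.comp_continuousOn hγc).inner hγ'c).mul
        ((hW.sub continuous_const).continuousOn)
  have hγbound : (1/8)*E - 2*A^2 - 2*A^2*M^2 - A*M ≤ actionB F W b γ γ' (t-1) t := by
    have hpt : ∀ τ ∈ Icc (t-1) t,
        (1/8)*‖γ' τ‖^2 - (2*A^2 + 2*A^2*M^2)
        ≤ (1/2) * ‖γ' τ - b‖^2 + ⟪gradient F (γ τ), γ' τ⟫ * (W τ - W t) - (1/2) * ‖b‖^2 := by
      intro τ hτ
      have h1 : ‖γ' τ‖ - ‖b‖ ≤ ‖γ' τ - b‖ := norm_sub_norm_le _ _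
      have h1' : ‖b‖ - ‖γ' τ‖ ≤ ‖γ' τ - b‖ := by
        have := norm_sub_norm_le b (γ' τ)
        rwa [norm_sub_rev] at this
      have h2 : |⟪gradient F (γ τ), γ' τ⟫ * (W τ - W t)| ≤ (A * ‖γ' τ‖) * M := by
        rw [abs_mul]
        apply mul_le_mul ?_ (hMb τ hτ) (abs_nonneg _) (by positivity)
        calc |⟪gradient F (γ τ), γ' τ⟫| ≤ ‖gradient F (γ τ)‖ * ‖γ' τ‖ := abs_real_inner_le_norm _ _
          _ ≤ A * ‖γ' τ‖ := mul_le_mul_of_nonneg_right (hF1A _) (norm_nonneg _)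
      have h2' := (abs_le.mp h2).1
      have hx0 : 0 ≤ ‖γ' τ‖ := norm_nonneg _
      have hb0 : 0 ≤ ‖b‖ := norm_nonneg _
      have hnb0 : 0 ≤ ‖γ' τ - b‖ := norm_nonneg _
      nlinarith [mul_nonneg (by linarith : (0:ℝ) ≤ ‖γ' τ - b‖ - (‖γ' τ‖ - ‖b‖))
          (by linarith : (0:ℝ) ≤ ‖γ' τ - b‖ + (‖γ' τ‖ - ‖b‖)),
        sq_nonneg (‖γ' τ‖ - 4*A*M), sq_nonneg (‖γ' τ‖ - 2*‖b‖), sq_nonneg ‖b‖,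
        mul_nonneg hM0 hM0, sq_nonneg (A*M), mul_le_mul hbA hbA hb0 (le_of_lt hA0)]
    have hgint : IntervalIntegrable (fun τ => (1/8)*‖γ' τ‖^2 - (2*A^2 + 2*A^2*M^2))
        volume (t-1) t :=
      (hInt_norm2.const_mul _).sub intervalIntegrable_const
    have hIγ : (1/8)*E - (2*A^2 + 2*A^2*M^2)
        ≤ ∫ τ in (t-1)..t, ((1/2) * ‖γ' τ - b‖^2
          + ⟪gradient F (γ τ), γ' τ⟫ * (W τ - W t) - (1/2) * ‖b‖^2) := by
      have h6 := intervalIntegral.integral_mono_on hab hgint hγint hpt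
      rwa [intervalIntegral.integral_sub (hInt_norm2.const_mul _) intervalIntegrable_const,
        intervalIntegral.integral_const_mul, intervalIntegral.integral_const,
        show t - (t-1) = 1 by ring, one_smul, ← hEdef] at h6
    have hFterm : F (γ (t-1)) * (W t - W (t-1)) ≤ A * M := by
      have h5 : |F (γ (t-1)) * (W t - W (t-1))| ≤ A * M := by
        rw [abs_mul, abs_sub_comm]
        exact mul_le_mul (hF0A _) (hMb (t-1) ⟨le_refl _, hab⟩) (abs_nonneg _) (le_of_lt hA0)
      linarith [(abs_le.mp h5).2]
    unfold actionB
    linarith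
  -- energy bound
  have hE : E ≤ 32*A^2 + 24*A^2*M + 16*A^2*M^2 := by
    have hAM : A*M ≤ A^2*M := by nlinarith [mul_nonneg (mul_nonneg hA0.le hM0) (sub_nonneg.2 hA1)]
    nlinarith [hγbound.trans (hcomp.trans hσbound)]
  -- L¹ bound
  have hL : L ≤ 9*A*(2+M) := by
    have hq : 2*A*(1+M)*L ≤ E + A^2*(1+M)^2 := by
      have hpt : ∀ τ ∈ Icc (t-1) t, 2*A*(1+M)*‖γ' τ‖ ≤ ‖γ' τ‖^2 + A^2*(1+M)^2 := by
        intro τ hτ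
        nlinarith [sq_nonneg (‖γ' τ‖ - A*(1+M))]
      have h1 := intervalIntegral.integral_mono_on hab (hInt_norm.const_mul (2*A*(1+M)))
        (hInt_norm2.add intervalIntegrable_const) hpt
      rwa [intervalIntegral.integral_const_mul,
        intervalIntegral.integral_add hInt_norm2 intervalIntegrable_const,
        intervalIntegral.integral_const, show t - (t-1) = 1 by ring, one_smul,
        ← hEdef, ← hLdef] at h1
    have h2 : 2*A*(1+M)*L ≤ 2*A*(1+M)*(9*A*(2+M)) := by nlinarith
    exact le_of_mul_le_mul_left h2 (by positivity)
  -- choose a point with small velocity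
  obtain ⟨s₀, hs₀mem, hs₀min⟩ := isCompact_Icc.exists_isMinOn (nonempty_Icc.mpr hab) hγ'c.norm
  have hs₀L : ‖γ' s₀‖ ≤ L := by
    have h1 : (∫ _τ in (t-1)..t, ‖γ' s₀‖) ≤ ∫ τ in (t-1)..t, ‖γ' τ‖ :=
      intervalIntegral.integral_mono_on hab intervalIntegrable_const hInt_norm
        (fun x hx => hs₀min hx)
    rwa [intervalIntegral.integral_const, show t - (t-1) = 1 by ring, one_smul,
      ← hLdef] at h1
  -- Euler-Lagrange bound
  have hELs := hEL s₀ hs₀mem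
  have hIcc_sub : Icc s₀ t ⊆ Icc (t-1) t := Icc_subset_Icc hs₀mem.1 (le_refl t)
  have hs₀t : s₀ ≤ t := hs₀mem.2
  have hHc : ContinuousOn (fun τ => (W τ - W t) • fderiv ℝ (gradient F) (γ τ) (γ' τ))
      (Icc (t-1) t) := by
    apply ContinuousOn.smul ((hW.sub continuous_const).continuousOn)
    exact (hHessc.comp_continuousOn hγc).clm_apply hγ'c
  have hnormint : IntervalIntegrable (fun τ => A*M*‖γ' τ‖) volume s₀ t :=
    (contOn_intInt hs₀t ((hγ'c.mono hIcc_sub).norm)).const_mul _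
  have hIbound : ‖∫ τ in s₀..t, (W τ - W t) • fderiv ℝ (gradient F) (γ τ) (γ' τ)‖ ≤ A*M*L := by
    calc ‖∫ τ in s₀..t, (W τ - W t) • fderiv ℝ (gradient F) (γ τ) (γ' τ)‖
        ≤ ∫ τ in s₀..t, ‖(W τ - W t) • fderiv ℝ (gradient F) (γ τ) (γ' τ)‖ :=
          intervalIntegral.norm_integral_le_integral_norm hs₀t
      _ ≤ ∫ τ in s₀..t, A*M*‖γ' τ‖ := by
          apply intervalIntegral.integral_mono_on hs₀t
            (contOn_intInt hs₀t ((hHc.mono hIcc_sub).norm)) hnormint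
          intro τ hτ
          rw [norm_smul, Real.norm_eq_abs]
          calc |W τ - W t| * ‖fderiv ℝ (gradient F) (γ τ) (γ' τ)‖
              ≤ M * (A * ‖γ' τ‖) := by
                apply mul_le_mul (hMb τ (hIcc_sub hτ)) ?_ (norm_nonneg _) hM0
                calc ‖fderiv ℝ (gradient F) (γ τ) (γ' τ)‖
                    ≤ ‖fderiv ℝ (gradient F) (γ τ)‖ * ‖γ' τ‖ :=
                      ContinuousLinearMap.le_opNorm _ _
                  _ ≤ A * ‖γ' τ‖ := mul_le_mul_of_nonneg_right (hF2A _) (norm_nonneg _)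
            _ = A*M*‖γ' τ‖ := by ring
      _ = A*M* ∫ τ in s₀..t, ‖γ' τ‖ := by rw [intervalIntegral.integral_const_mul]
      _ ≤ A*M*L := by
          apply mul_le_mul_of_nonneg_left ?_ (by positivity)
          have hsplit : (∫ τ in (t-1)..s₀, ‖γ' τ‖) + (∫ τ in s₀..t, ‖γ' τ‖)
              = ∫ τ in (t-1)..t, ‖γ' τ‖ := by
            apply intervalIntegral.integral_add_adjacent_intervals
            · apply hInt_norm.mono_set
              rw [uIcc_of_le hab, uIcc_of_le hs₀mem.1]
              exact Icc_subset_Icc (le_refl _) hs₀t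
            · apply hInt_norm.mono_set
              rw [uIcc_of_le hab, uIcc_of_le hs₀t]
              exact hIcc_sub
          have hpos : 0 ≤ ∫ τ in (t-1)..s₀, ‖γ' τ‖ :=
            intervalIntegral.integral_nonneg hs₀mem.1 (fun u _ => norm_nonneg _)
          rw [hLdef]
          linarith
  have hfinal : ‖γ' t‖ ≤ L + A*M*L + A*M := by
    rw [hELs]
    have h3 : ‖(W s₀ - W t) • gradient F (γ s₀)‖ ≤ M * A := by
      rw [norm_smul, Real.norm_eq_abs]
      exact mul_le_mul (hMb s₀ hs₀mem) (hF1A _) (norm_nonneg _) hM0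
    calc ‖γ' s₀ + (∫ τ in s₀..t, (W τ - W t) • fderiv ℝ (gradient F) (γ τ) (γ' τ))
          + (W s₀ - W t) • gradient F (γ s₀)‖
        ≤ ‖γ' s₀‖ + ‖∫ τ in s₀..t, (W τ - W t) • fderiv ℝ (gradient F) (γ τ) (γ' τ)‖
          + ‖(W s₀ - W t) • gradient F (γ s₀)‖ := norm_add₃_le
      _ ≤ L + A*M*L + A*M := by linarith [hIbound, h3, hs₀L]
  -- final arithmetic
  have hgoal : L + A*M*L + A*M ≤ 100*A^2*(1 + M^2) := by
    have hL' : L ≤ 18*A + 9*A*M := by nlinarith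
    nlinarith [sq_nonneg (M-1), mul_nonneg (le_of_lt hA0) hM0, sq_nonneg M,
      mul_nonneg (mul_nonneg (le_of_lt hA0) (le_of_lt hA0)) (sq_nonneg (M-1)),
      mul_nonneg (mul_nonneg (le_of_lt hA0) hM0) hM0]
  have hfin2 : ‖γ' t‖ ≤ 100*A^2*(1 + M^2) := hfinal.trans hgoal
  rw [hAdef, hMdef] at hfin2
  exact hfin2
end

section
/- Let t ∈ ℝ, let γ : [t−1, t] → ℝ^d be absolutely continuous, let v ∈ ℝ^d with |v| ≤ √d, and define the shifted curve γ̃(τ) = γ(τ) + v·(τ − t + 1) for τ ∈ [t−1, t]. Then there is a constant c > 0, depending only on d, |b|, C₁ and C₂, such that |A^{W,b}_{t−1,t}(γ̃) − A^{W,b}_{t−1,t}(γ)| ≤ c·( 1 + max_{t−1 ≤ s ≤ t} |W(s) − W(t)| )·( 1 + ∫_{t−1}^{t} |γ̇(τ)| dτ )·|v|. -/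
open MeasureTheory Set Real RealInnerProductSpace

lemma diff_bound_aux {f g h g₀ : ℝ → ℝ} {s t : ℝ} (hst : s ≤ t)
    (hfg : ∀ τ, f τ = g τ + h τ) (hh : IntervalIntegrable h volume s t)
    (hg₀ : IntervalIntegrable g₀ volume s t)
    (hbd : ∀ τ ∈ Set.Ioc s t, |h τ| ≤ g₀ τ) (hg₀0 : ∀ τ, 0 ≤ g₀ τ) :
    |(∫ τ in s..t, f τ) - ∫ τ in s..t, g τ| ≤ ∫ τ in s..t, g₀ τ := by
  have hI0 : 0 ≤ ∫ τ in s..t, g₀ τ :=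
    intervalIntegral.integral_nonneg hst fun u _ => hg₀0 u
  by_cases hg : IntervalIntegrable g volume s t
  · have hfeq : f = fun τ => g τ + h τ := funext hfg
    rw [hfeq, intervalIntegral.integral_add hg hh]
    have hae : ∀ᵐ τ ∂volume.restrict (uIoc s t), ‖h τ‖ ≤ g₀ τ := by
      rw [uIoc_of_le hst]
      exact (ae_restrict_iff' measurableSet_Ioc).mpr (ae_of_all _ fun τ hτ => by
        rw [Real.norm_eq_abs]; exact hbd τ hτ)
    have := intervalIntegral.norm_integral_le_abs_of_norm_le hae hg₀
    rw [abs_of_nonneg hI0] at this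
    calc |(∫ τ in s..t, g τ) + (∫ τ in s..t, h τ) - ∫ τ in s..t, g τ|
        = |∫ τ in s..t, h τ| := by ring_nf
      _ ≤ ∫ τ in s..t, g₀ τ := this
  · have hf : ¬ IntervalIntegrable f volume s t := by
      intro hf
      have : g = fun τ => f τ - h τ := funext fun τ => by rw [hfg τ]; ring
      exact hg (this ▸ hf.sub hh)
    rw [intervalIntegral.integral_undef hf, intervalIntegral.integral_undef hg]
    simpa using hI0


set_option maxHeartbeats 2000000 in
/-- For an absolutely continuous `γ : [t-1, t] → ℝ^d`, `v ∈ ℝ^d` with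
`|v| ≤ √d`, and the shifted curve `γ̃(τ) = γ(τ) + v (τ - t + 1)`, there is a constant `c > 0`
depending only on `d, |b|, C₁, C₂` such that
`|A^{W,b}_{t-1,t}(γ̃) - A^{W,b}_{t-1,t}(γ)| ≤ c (1 + max_{t-1≤s≤t} |W(s) - W(t)|)
(1 + ∫_{t-1}^t |γ̇|) |v|`. -/
theorem action_shifted_curve_difference_bound (d : ℕ) (hd : 1 ≤ d) (C₁ C₂ B : ℝ) :
    ∃ c : ℝ, 0 < c ∧
      ∀ b : EuclideanSpace ℝ (Fin d), ‖b‖ = B →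
      ∀ F : EuclideanSpace ℝ (Fin d) → ℝ, ContDiff ℝ 2 F →
        (∀ x, ‖gradient F x‖ ≤ C₁) →
        (∀ x, ‖fderiv ℝ (gradient F) x‖ ≤ C₂) →
      ∀ W : ℝ → ℝ, Continuous W →
      ∀ t : ℝ, ∀ γ γ' : ℝ → EuclideanSpace ℝ (Fin d), IsACWith γ γ' (t-1) t →
      ∀ v : EuclideanSpace ℝ (Fin d), ‖v‖ ≤ Real.sqrt d →
        |actionB F W b (fun τ => γ τ + (τ - t + 1) • v) (fun τ => γ' τ + v) (t-1) t
            - actionB F W b γ γ' (t-1) t|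
          ≤ c * (1 + maxW W (t-1) t) * (1 + ∫ τ in (t-1)..t, ‖γ' τ‖) * ‖v‖ := by
  refine ⟨1 + Real.sqrt d + |B| + |C₁| + |C₂|, by positivity, ?_⟩
  intro b hB F hF hC1 hC2 W hW t γ γ' hγ v hv
  have hst : t - 1 ≤ t := by linarith
  have hB0 : 0 ≤ B := hB ▸ norm_nonneg b
  have hC10 : 0 ≤ C₁ := le_trans (norm_nonneg _) (hC1 0)
  have hC20 : 0 ≤ C₂ := le_trans (norm_nonneg _) (hC2 0)
  have hsd : 0 ≤ Real.sqrt d := Real.sqrt_nonneg _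
  have hv0 : 0 ≤ ‖v‖ := norm_nonneg v
  -- gradient facts
  have hgd : Differentiable ℝ (gradient F) := by
    have h1 : ContDiff ℝ 1 (fderiv ℝ F) := hF.fderiv_right (by norm_num)
    have : gradient F = fun x =>
        (InnerProductSpace.toDual ℝ (EuclideanSpace ℝ (Fin d))).symm (fderiv ℝ F x) := rfl
    rw [this]
    exact (InnerProductSpace.toDual ℝ _).symm.differentiable.comp (h1.differentiable (by norm_num))
  have hgc : Continuous (gradient F) := hgd.continuous
  have hLip : ∀ x y : EuclideanSpace ℝ (Fin d),
      ‖gradient F x - gradient F y‖ ≤ C₂ * ‖x - y‖ := fun x y =>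
    convex_univ.norm_image_sub_le_of_norm_fderiv_le
      (fun z _ => hgd z) (fun z _ => hC2 z) (mem_univ y) (mem_univ x)
  -- maxW facts
  set M := maxW W (t-1) t with hMdef
  have hMb : ∀ τ ∈ Icc (t-1) t, |W τ - W t| ≤ M := fun τ hτ =>
    le_csSup (isCompact_Icc.bddAbove_image
      ((continuous_abs.comp (hW.sub continuous_const)).continuousOn)) ⟨τ, hτ, rfl⟩
  have hM0 : 0 ≤ M := by
    have := hMb t ⟨hst, le_refl t⟩
    simpa using (abs_nonneg (W t - W t)).trans this
  set I := ∫ τ in (t-1)..t, ‖γ' τ‖ with hIdef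
  have hnormint : IntervalIntegrable (fun τ => ‖γ' τ‖) volume (t-1) t := hγ.1.norm
  have hI0 : 0 ≤ I := intervalIntegral.integral_nonneg hst fun u _ => norm_nonneg _
  -- the three functions
  set g : ℝ → ℝ := fun τ => (1/2) * ‖γ' τ - b‖^2
      + ⟪gradient F (γ τ), γ' τ⟫ * (W τ - W t) - (1/2) * ‖b‖^2 with hgdef
  set f : ℝ → ℝ := fun τ => (1/2) * ‖γ' τ + v - b‖^2
      + ⟪gradient F (γ τ + (τ - t + 1) • v), γ' τ + v⟫ * (W τ - W t) - (1/2) * ‖b‖^2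
      with hfdef
  set h : ℝ → ℝ := fun τ => ⟪γ' τ - b, v⟫ + (1/2) * ‖v‖^2
      + (⟪gradient F (γ τ + (τ - t + 1) • v), γ' τ + v⟫
         - ⟪gradient F (γ τ), γ' τ⟫) * (W τ - W t) with hhdef
  set g₀ : ℝ → ℝ := fun τ =>
      ((1 + M*C₂) * ‖γ' τ‖ + (B + Real.sqrt d / 2 + M*C₁)) * ‖v‖ with hg₀def
  have hfg : ∀ τ, f τ = g τ + h τ := by
    intro τ
    have e1 : γ' τ + v - b = (γ' τ - b) + v := by abel
    simp only [hfdef, hgdef, hhdef, e1, @norm_add_sq_real]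
    ring
  have hg₀0 : ∀ τ, 0 ≤ g₀ τ := fun τ => by
    have : 0 ≤ (1 + M*C₂) * ‖γ' τ‖ + (B + Real.sqrt d / 2 + M*C₁) := by positivity
    exact mul_nonneg this hv0
  have hg₀int : IntervalIntegrable g₀ volume (t-1) t :=
    ((hnormint.const_mul _).add intervalIntegrable_const).mul_const _
  -- pointwise bound on Icc
  have hbd : ∀ τ ∈ Icc (t-1) t, |h τ| ≤ g₀ τ := by
    intro τ hτ
    obtain ⟨h1, h2⟩ := hτ
    have e1 : |⟪γ' τ - b, v⟫| ≤ (‖γ' τ‖ + B) * ‖v‖ := by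
      calc |⟪γ' τ - b, v⟫| ≤ ‖γ' τ - b‖ * ‖v‖ := abs_real_inner_le_norm _ _
        _ ≤ (‖γ' τ‖ + B) * ‖v‖ := by
            apply mul_le_mul_of_nonneg_right _ hv0
            calc ‖γ' τ - b‖ ≤ ‖γ' τ‖ + ‖b‖ := norm_sub_le _ _
              _ = ‖γ' τ‖ + B := by rw [hB]
    have e2 : (1/2) * ‖v‖^2 ≤ (Real.sqrt d / 2) * ‖v‖ := by
      have := mul_le_mul_of_nonneg_right hv hv0
      nlinarith [sq_nonneg ‖v‖]
    have e3 : |⟪gradient F (γ τ + (τ - t + 1) • v), γ' τ + v⟫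
        - ⟪gradient F (γ τ), γ' τ⟫| ≤ C₂ * ‖v‖ * ‖γ' τ‖ + C₁ * ‖v‖ := by
      have split : ⟪gradient F (γ τ + (τ - t + 1) • v), γ' τ + v⟫
          - ⟪gradient F (γ τ), γ' τ⟫
          = ⟪gradient F (γ τ + (τ - t + 1) • v) - gradient F (γ τ), γ' τ⟫
            + ⟪gradient F (γ τ + (τ - t + 1) • v), v⟫ := by
        rw [inner_sub_left, inner_add_right]; ring
      rw [split]
      have hd1 : ‖gradient F (γ τ + (τ - t + 1) • v) - gradient F (γ τ)‖ ≤ C₂ * ‖v‖ := by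
        have := hLip (γ τ + (τ - t + 1) • v) (γ τ)
        have e : γ τ + (τ - t + 1) • v - γ τ = (τ - t + 1) • v := by abel
        rw [e, norm_smul, Real.norm_eq_abs] at this
        have habs : |τ - t + 1| ≤ 1 := abs_le.mpr ⟨by linarith, by linarith⟩
        calc ‖gradient F (γ τ + (τ - t + 1) • v) - gradient F (γ τ)‖
            ≤ C₂ * (|τ - t + 1| * ‖v‖) := this
          _ ≤ C₂ * (1 * ‖v‖) := by
              apply mul_le_mul_of_nonneg_left _ hC20
              exact mul_le_mul_of_nonneg_right habs hv0
          _ = C₂ * ‖v‖ := by ring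
      have b1 : |⟪gradient F (γ τ + (τ - t + 1) • v) - gradient F (γ τ), γ' τ⟫|
          ≤ C₂ * ‖v‖ * ‖γ' τ‖ :=
        (abs_real_inner_le_norm _ _).trans (mul_le_mul_of_nonneg_right hd1 (norm_nonneg _))
      have b2 : |⟪gradient F (γ τ + (τ - t + 1) • v), v⟫| ≤ C₁ * ‖v‖ :=
        (abs_real_inner_le_norm _ _).trans (mul_le_mul_of_nonneg_right (hC1 _) hv0)
      exact (abs_add_le _ _).trans (by linarith)
    have e4 : |W τ - W t| ≤ M := hMb τ ⟨h1, h2⟩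
    have e5 : |(⟪gradient F (γ τ + (τ - t + 1) • v), γ' τ + v⟫
        - ⟪gradient F (γ τ), γ' τ⟫) * (W τ - W t)|
        ≤ (C₂ * ‖v‖ * ‖γ' τ‖ + C₁ * ‖v‖) * M := by
      rw [abs_mul]
      exact mul_le_mul e3 e4 (abs_nonneg _) (by positivity)
    have trig : |h τ| ≤ |⟪γ' τ - b, v⟫| + (1/2) * ‖v‖^2
        + |(⟪gradient F (γ τ + (τ - t + 1) • v), γ' τ + v⟫
           - ⟪gradient F (γ τ), γ' τ⟫) * (W τ - W t)| := by
      simp only [hhdef]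
      calc |⟪γ' τ - b, v⟫ + (1/2) * ‖v‖^2 + _| ≤ |⟪γ' τ - b, v⟫ + (1/2) * ‖v‖^2| + _ :=
            abs_add_le _ _
        _ ≤ _ := by
            have := abs_add_le ⟪γ' τ - b, v⟫ ((1/2) * ‖v‖^2)
            have h2 : |(1/2) * ‖v‖^2| = (1/2) * ‖v‖^2 := abs_of_nonneg (by positivity)
            linarith
    simp only [hg₀def]
    nlinarith [norm_nonneg (γ' τ), mul_nonneg (mul_nonneg hC20 hv0) (norm_nonneg (γ' τ)),
      mul_nonneg hM0 (mul_nonneg hC10 hv0)]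
  -- measurability / integrability of h
  have hγ'Ioc : IntegrableOn γ' (Ioc (t-1) t) volume := by
    have := intervalIntegrable_iff.mp hγ.1
    rwa [uIoc_of_le hst] at this
  have hγ'm : AEStronglyMeasurable γ' (volume.restrict (Ioc (t-1) t)) :=
    hγ'Ioc.aestronglyMeasurable
  have hγcCont : ContinuousOn (fun τ => γ (t-1) + ∫ u in (t-1)..τ, γ' u) (Icc (t-1) t) := by
    have := intervalIntegral.continuousOn_primitive_interval' hγ.1 left_mem_uIcc
    rw [uIcc_of_le hst] at this
    exact continuousOn_const.add this
  have hγm : AEStronglyMeasurable γ (volume.restrict (Ioc (t-1) t)) := by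
    refine AEStronglyMeasurable.congr
      ((hγcCont.aestronglyMeasurable measurableSet_Icc).mono_measure
        (Measure.restrict_mono Ioc_subset_Icc_self le_rfl)) ?_
    exact (ae_restrict_iff' measurableSet_Ioc).mpr (ae_of_all _ fun τ hτ =>
      (hγ.2 τ (Ioc_subset_Icc_self hτ)).symm)
  have hgtm : AEStronglyMeasurable (fun τ => γ τ + (τ - t + 1) • v)
      (volume.restrict (Ioc (t-1) t)) :=
    hγm.add (((continuous_id.sub continuous_const).add continuous_const).smul
      continuous_const).aestronglyMeasurable
  have hhm : AEStronglyMeasurable h (volume.restrict (Ioc (t-1) t)) := by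
    simp only [hhdef]
    refine (((hγ'm.sub aestronglyMeasurable_const).inner aestronglyMeasurable_const).add
      aestronglyMeasurable_const).add ?_
    refine AEStronglyMeasurable.mul ?_ ((hW.sub continuous_const).aestronglyMeasurable)
    refine AEStronglyMeasurable.sub ?_ ?_
    · exact ((hgc.comp_aestronglyMeasurable hgtm).inner
        (hγ'm.add aestronglyMeasurable_const))
    · exact (hgc.comp_aestronglyMeasurable hγm).inner hγ'm
  have hhint : IntervalIntegrable h volume (t-1) t := by
    rw [intervalIntegrable_iff, uIoc_of_le hst]
    have hg₀Ioc : IntegrableOn g₀ (Ioc (t-1) t) volume := by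
      have := intervalIntegrable_iff.mp hg₀int
      rwa [uIoc_of_le hst] at this
    refine Integrable.mono' hg₀Ioc hhm ?_
    exact (ae_restrict_iff' measurableSet_Ioc).mpr (ae_of_all _ fun τ hτ => by
      rw [Real.norm_eq_abs]; exact hbd τ (Ioc_subset_Icc_self hτ))
  -- key rewriting
  have key : actionB F W b (fun τ => γ τ + (τ - t + 1) • v) (fun τ => γ' τ + v) (t-1) t
      - actionB F W b γ γ' (t-1) t = (∫ τ in (t-1)..t, f τ) - ∫ τ in (t-1)..t, g τ := by
    simp only [actionB, hfdef, hgdef]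
    have h0 : (t - 1 - t + 1 : ℝ) = 0 := by ring
    rw [h0, zero_smul, add_zero]
    ring
  rw [key]
  have main := diff_bound_aux hst hfg hhint hg₀int
    (fun τ hτ => hbd τ (Ioc_subset_Icc_self hτ)) hg₀0
  refine main.trans ?_
  -- compute ∫ g₀ and conclude
  have hint_eval : ∫ τ in (t-1)..t, g₀ τ
      = ((1 + M*C₂) * I + (B + Real.sqrt d / 2 + M*C₁)) * ‖v‖ := by
    simp only [hg₀def]
    rw [intervalIntegral.integral_mul_const,
      intervalIntegral.integral_add (hnormint.const_mul _) intervalIntegrable_const,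
      intervalIntegral.integral_const_mul, intervalIntegral.integral_const]
    have : (t - (t-1)) = (1:ℝ) := by ring
    rw [this, one_smul, hIdef]
  rw [hint_eval]
  have hBa : |B| = B := abs_of_nonneg hB0
  have hC1a : |C₁| = C₁ := abs_of_nonneg hC10
  have hC2a : |C₂| = C₂ := abs_of_nonneg hC20
  rw [hBa, hC1a, hC2a]
  apply mul_le_mul_of_nonneg_right _ hv0
  nlinarith [mul_nonneg hM0 hI0, mul_nonneg hC20 (mul_nonneg hM0 hI0),
    mul_nonneg hC10 hM0, mul_nonneg hsd hM0, mul_nonneg hsd hI0,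
    mul_nonneg hB0 hM0, mul_nonneg hB0 hI0, mul_nonneg hC10 hI0,
    mul_nonneg hsd (mul_nonneg hM0 hI0), mul_nonneg hB0 (mul_nonneg hM0 hI0),
    mul_nonneg hC10 (mul_nonneg hM0 hI0), mul_nonneg hC20 hM0, mul_nonneg hC20 hI0]
end

section
/- Let t₀ < t_i be reals with t₀ − 1 < t₀, let ψ₀ : ℝ^d → ℝ be bounded and ℤ^d-periodic, and for t > t₀ − 1 define ψ(x, t) = inf{ ψ₀(γ(t₀−1)) + A^{W,b}_{t₀−1,t}(γ) : γ absolutely continuous on [t₀−1, t] with γ(t) = x }. Then for any x₀, x_i ∈ ℝ^d there is a constant c > 0, depending only on d, |b|, C₀, C₁, x₀, x_i, t₀ and t_i (and not on W), such that |ψ(x_i, t_i) − ψ(x₀, t₀)| ≤ c·( 1 + max_{t₀−1 ≤ τ ≤ t_i} |W(τ) − W(t_i)|² ). -/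
open MeasureTheory Set Real RealInnerProductSpace

/-- The Lax–Oleinik value
`ψ(x, t) = inf { ψ₀(γ(s)) + A^{W,b}_{s,t}(γ) : γ absolutely continuous on [s,t], γ(t) = x }`. -/
noncomputable def laxB {d : ℕ} (F : EuclideanSpace ℝ (Fin d) → ℝ) (W : ℝ → ℝ)
    (b : EuclideanSpace ℝ (Fin d)) (ψ₀ : EuclideanSpace ℝ (Fin d) → ℝ) (s t : ℝ)
    (x : EuclideanSpace ℝ (Fin d)) : ℝ :=
  sInf {r : ℝ | ∃ γ γ' : ℝ → EuclideanSpace ℝ (Fin d),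
    IsACWith γ γ' s t ∧ γ t = x ∧ r = ψ₀ (γ s) + actionB F W b γ γ' s t}

/-! ### Auxiliary lemmas -/

/-- The integrand of the action functional. -/
noncomputable def integrnd {d : ℕ} (F : EuclideanSpace ℝ (Fin d) → ℝ) (W : ℝ → ℝ)
    (b : EuclideanSpace ℝ (Fin d)) (γ γ' : ℝ → EuclideanSpace ℝ (Fin d)) (t : ℝ) : ℝ → ℝ :=
  fun τ => (1/2) * ‖γ' τ - b‖^2 + ⟪gradient F (γ τ), γ' τ⟫ * (W τ - W t) - (1/2) * ‖b‖^2

lemma actionB_eq_integrnd {d : ℕ} (F : EuclideanSpace ℝ (Fin d) → ℝ) (W : ℝ → ℝ)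
    (b : EuclideanSpace ℝ (Fin d)) (γ γ' : ℝ → EuclideanSpace ℝ (Fin d)) (s t : ℝ) :
    actionB F W b γ γ' s t
      = (∫ τ in s..t, integrnd F W b γ γ' t τ) - F (γ s) * (W t - W s) := rfl

lemma continuous_gradient {d : ℕ} {F : EuclideanSpace ℝ (Fin d) → ℝ} (hF : ContDiff ℝ 1 F) :
    Continuous (gradient F) := by
  unfold gradient
  exact (LinearIsometryEquiv.continuous _).comp (hF.continuous_fderiv one_ne_zero)

/-- Rounding to a nearby integer vector. -/
lemma exists_intVec_close {d : ℕ} (z : EuclideanSpace ℝ (Fin d)) :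
    ∃ v : EuclideanSpace ℝ (Fin d), IsIntVec v ∧ ‖z - v‖ ≤ Real.sqrt d := by
  classical
  set v : EuclideanSpace ℝ (Fin d) := WithLp.toLp 2 (fun i => (round (z i) : ℝ)) with hv_def
  refine ⟨v, fun i => ⟨round (z i), rfl⟩, ?_⟩
  rw [EuclideanSpace.norm_eq]
  apply Real.sqrt_le_sqrt
  have h1 : ∀ i : Fin d, ‖(z - v) i‖ ^ 2 ≤ 1 := by
    intro i
    have h2 : (z - v) i = z i - round (z i) := rfl
    rw [h2]
    have h3 : |z i - round (z i)| ≤ 1 / 2 := abs_sub_round (z i)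
    have h4 : ‖z i - (round (z i) : ℝ)‖ = |z i - round (z i)| := rfl
    rw [h4]
    nlinarith [abs_nonneg (z i - round (z i))]
  calc (∑ i : Fin d, ‖(z - v) i‖ ^ 2) ≤ ∑ _i : Fin d, (1 : ℝ) :=
        Finset.sum_le_sum (fun i _ => h1 i)
    _ = d := by simp

/-- Straight line curves are absolutely continuous. -/
lemma isACWith_line {d : ℕ} (p w : EuclideanSpace ℝ (Fin d)) (s t : ℝ) :
    IsACWith (fun τ => p + (τ - s) • w) (fun _ => w) s t := by
  refine ⟨intervalIntegrable_const, fun τ _ => ?_⟩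
  rw [intervalIntegral.integral_const]
  simp

/-- Global lower bound for the action integrand's integral (junk-value safe). -/
lemma integrnd_integral_ge {d : ℕ} {F : EuclideanSpace ℝ (Fin d) → ℝ} {W : ℝ → ℝ}
    {b : EuclideanSpace ℝ (Fin d)} {C₁ : ℝ} (hC₁ : ∀ x, ‖gradient F x‖ ≤ C₁)
    (γ γ' : ℝ → EuclideanSpace ℝ (Fin d)) {a c t K : ℝ} (hac : a ≤ c) (hK0 : 0 ≤ K)
    (hK : ∀ τ ∈ Icc a c, |W τ - W t| ≤ K) :
    -((c - a) * ((1/2) * C₁^2 * K^2 + C₁ * K * ‖b‖ + (1/2) * ‖b‖^2))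
      ≤ ∫ τ in a..c, integrnd F W b γ γ' t τ := by
  have hC₁0 : 0 ≤ C₁ := le_trans (norm_nonneg _) (hC₁ 0)
  have hκ0 : 0 ≤ (1/2) * C₁^2 * K^2 + C₁ * K * ‖b‖ + (1/2) * ‖b‖^2 := by positivity
  by_cases hI : IntervalIntegrable (fun τ => integrnd F W b γ γ' t τ) volume a c
  · have hpt : ∀ τ ∈ Icc a c,
        -((1/2) * C₁^2 * K^2 + C₁ * K * ‖b‖ + (1/2) * ‖b‖^2) ≤ integrnd F W b γ γ' t τ := by
      intro τ hτ
      have hi : |(⟪gradient F (γ τ), γ' τ⟫ : ℝ)| ≤ C₁ * ‖γ' τ‖ :=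
        (abs_real_inner_le_norm _ _).trans
          (mul_le_mul_of_nonneg_right (hC₁ _) (norm_nonneg _))
      have hn : ‖γ' τ‖ ≤ ‖γ' τ - b‖ + ‖b‖ := by
        calc ‖γ' τ‖ = ‖(γ' τ - b) + b‖ := by rw [sub_add_cancel]
          _ ≤ ‖γ' τ - b‖ + ‖b‖ := norm_add_le _ _
      have hu : |W τ - W t| ≤ K := hK τ hτ
      have hPu : -(C₁ * ‖γ' τ‖ * K) ≤ (⟪gradient F (γ τ), γ' τ⟫ : ℝ) * (W τ - W t) := by
        have h5 : |(⟪gradient F (γ τ), γ' τ⟫ : ℝ) * (W τ - W t)| ≤ C₁ * ‖γ' τ‖ * K := by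
          rw [abs_mul]
          exact mul_le_mul hi hu (abs_nonneg _) (by positivity)
        linarith [(abs_le.mp h5).1]
      unfold integrnd
      nlinarith [sq_nonneg (‖γ' τ - b‖ - C₁ * K), norm_nonneg (γ' τ - b), norm_nonneg b,
        mul_le_mul_of_nonneg_left hn (mul_nonneg hC₁0 hK0)]
    have h6 := intervalIntegral.integral_mono_on (μ := volume) hac
      (intervalIntegrable_const
        (c := -((1/2) * C₁^2 * K^2 + C₁ * K * ‖b‖ + (1/2) * ‖b‖^2))) hI hpt
    rw [intervalIntegral.integral_const, smul_eq_mul] at h6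
    nlinarith [h6]
  · rw [intervalIntegral.integral_undef hI]
    nlinarith [mul_nonneg (by linarith : (0:ℝ) ≤ c - a) hκ0]

/-- Upper bound on the action integrand's integral over a straight line. -/
lemma line_integrnd_le {d : ℕ} {F : EuclideanSpace ℝ (Fin d) → ℝ} {W : ℝ → ℝ}
    {b : EuclideanSpace ℝ (Fin d)} (hF : ContDiff ℝ 1 F) {C₁ : ℝ}
    (hC₁ : ∀ x, ‖gradient F x‖ ≤ C₁) (hW : Continuous W)
    (p w : EuclideanSpace ℝ (Fin d)) {s t tt K : ℝ} (hst : s ≤ t) (hK0 : 0 ≤ K)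
    (hK : ∀ τ ∈ Icc s t, |W τ - W tt| ≤ K) :
    (∫ τ in s..t, integrnd F W b (fun τ => p + (τ - s) • w) (fun _ => w) tt τ)
      ≤ (t - s) * ((1/2) * (‖w‖ + ‖b‖)^2 + C₁ * ‖w‖ * K + (1/2) * ‖b‖^2) := by
  have hC₁0 : 0 ≤ C₁ := le_trans (norm_nonneg _) (hC₁ 0)
  have hcont : Continuous (fun τ => integrnd F W b (fun τ => p + (τ - s) • w)
      (fun _ => w) tt τ) := by
    unfold integrnd
    apply Continuous.sub _ continuous_const
    apply Continuous.add continuous_const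
    apply Continuous.mul
    · exact Continuous.inner
        ((continuous_gradient hF).comp
          (continuous_const.add ((continuous_id.sub continuous_const).smul continuous_const)))
        continuous_const
    · exact hW.sub continuous_const
  have hpt : ∀ τ ∈ Icc s t, integrnd F W b (fun τ => p + (τ - s) • w) (fun _ => w) tt τ
      ≤ (1/2) * (‖w‖ + ‖b‖)^2 + C₁ * ‖w‖ * K + (1/2) * ‖b‖^2 := by
    intro τ hτ
    have hi : |(⟪gradient F (p + (τ - s) • w), w⟫ : ℝ)| ≤ C₁ * ‖w‖ :=
      (abs_real_inner_le_norm _ _).trans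
        (mul_le_mul_of_nonneg_right (hC₁ _) (norm_nonneg _))
    have hu : |W τ - W tt| ≤ K := hK τ hτ
    have hPu : (⟪gradient F (p + (τ - s) • w), w⟫ : ℝ) * (W τ - W tt) ≤ C₁ * ‖w‖ * K := by
      have h5 : |(⟪gradient F (p + (τ - s) • w), w⟫ : ℝ) * (W τ - W tt)| ≤ C₁ * ‖w‖ * K := by
        rw [abs_mul]
        exact mul_le_mul hi hu (abs_nonneg _) (by positivity)
      linarith [(abs_le.mp h5).2]
    have hn : ‖w - b‖ ≤ ‖w‖ + ‖b‖ := norm_sub_le _ _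
    unfold integrnd
    nlinarith [norm_nonneg (w - b), norm_nonneg w, norm_nonneg b, sq_nonneg (‖b‖)]
  have h6 := intervalIntegral.integral_mono_on (μ := volume) hst
    (hcont.intervalIntegrable s t)
    (intervalIntegrable_const
      (c := (1/2) * (‖w‖ + ‖b‖)^2 + C₁ * ‖w‖ * K + (1/2) * ‖b‖^2)) hpt
  rw [intervalIntegral.integral_const, smul_eq_mul] at h6
  linarith

lemma numA (sd B C₀ C₁ L M : ℝ) (hsd0 : 0 ≤ sd) (hB0 : 0 ≤ B) (hC₀0 : 0 ≤ C₀)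
    (hC₁0 : 0 ≤ C₁) (hL1 : 1 ≤ L) (hM0 : 0 ≤ M) :
    L * ((1/2)*(sd+B)^2 + C₁*sd*M + (1/2)*B^2) + (2*C₁^2*M^2 + 2*C₁*M*B + (1/2)*B^2) + 4*C₀*M
      ≤ (L * ((sd + B)^2 + 2 * C₁ * sd + B^2 + 2 * C₁^2 + 2 * C₁ * B + 4 * C₀ + 1)) * (1 + M^2) := by
  have hL0 : (0:ℝ) ≤ L := by linarith
  have hMM : M ≤ 1 + M^2 := by nlinarith [sq_nonneg (M - 1)]
  have hA1 : L * ((1/2)*(sd+B)^2) ≤ L * ((sd+B)^2*(1+M^2)) :=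
    mul_le_mul_of_nonneg_left (by nlinarith [sq_nonneg (sd+B), sq_nonneg M]) hL0
  have hA2 : L * (C₁*sd*M) ≤ L * ((2*C₁*sd)*(1+M^2)) :=
    mul_le_mul_of_nonneg_left
      (by nlinarith [mul_le_mul_of_nonneg_left hMM (mul_nonneg hC₁0 hsd0),
        mul_nonneg (mul_nonneg hC₁0 hsd0) (by nlinarith [sq_nonneg M] : (0:ℝ) ≤ 1 + M^2)]) hL0
  have hA3 : L * ((1/2)*B^2) + (1/2)*B^2 ≤ L * (B^2*(1+M^2)) := by
    nlinarith [mul_nonneg (by linarith : (0:ℝ) ≤ L - 1) (sq_nonneg B),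
      mul_nonneg (mul_nonneg hL0 (sq_nonneg B)) (sq_nonneg M)]
  have hA4 : 2*C₁^2*M^2 ≤ L * ((2*C₁^2)*(1+M^2)) := by
    nlinarith [mul_nonneg (by linarith : (0:ℝ) ≤ L - 1)
        (mul_nonneg (mul_nonneg (by norm_num : (0:ℝ) ≤ 2) (sq_nonneg C₁))
          (by nlinarith [sq_nonneg M] : (0:ℝ) ≤ 1 + M^2)),
      mul_nonneg (sq_nonneg C₁) (by norm_num : (0:ℝ) ≤ 1)]
  have hA5 : 2*C₁*M*B ≤ L * ((2*C₁*B)*(1+M^2)) := by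
    nlinarith [mul_le_mul_of_nonneg_left hMM
        (mul_nonneg (mul_nonneg (by norm_num : (0:ℝ) ≤ 2) hC₁0) hB0),
      mul_nonneg (by linarith : (0:ℝ) ≤ L - 1)
        (mul_nonneg (mul_nonneg (mul_nonneg (by norm_num : (0:ℝ) ≤ 2) hC₁0) hB0)
          (by nlinarith [sq_nonneg M] : (0:ℝ) ≤ 1 + M^2))]
  have hA6 : 4*C₀*M ≤ L * ((4*C₀)*(1+M^2)) := by
    nlinarith [mul_le_mul_of_nonneg_left hMM (mul_nonneg (by norm_num : (0:ℝ) ≤ 4) hC₀0),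
      mul_nonneg (by linarith : (0:ℝ) ≤ L - 1)
        (mul_nonneg (mul_nonneg (by norm_num : (0:ℝ) ≤ 4) hC₀0)
          (by nlinarith [sq_nonneg M] : (0:ℝ) ≤ 1 + M^2))]
  have hA7 : (0:ℝ) ≤ L * (1 * (1+M^2)) :=
    mul_nonneg hL0 (by nlinarith [sq_nonneg M])
  linarith [hA1, hA2, hA3, hA4, hA5, hA6, hA7]

set_option maxHeartbeats 2000000 in
lemma numB (sd B C₀ C₁ L M : ℝ) (hsd0 : 0 ≤ sd) (hB0 : 0 ≤ B) (hC₀0 : 0 ≤ C₀)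
    (hC₁0 : 0 ≤ C₁) (hL1 : 1 ≤ L) (hM0 : 0 ≤ M) :
    ((1/2)*(sd+B)^2 + 2*C₁*sd*M + (1/2)*B^2)
      + L * ((1/2)*C₁^2*M^2 + C₁*M*B + (1/2)*B^2) + 4*C₀*M
      ≤ (L * ((sd + B)^2 + 2 * C₁ * sd + B^2 + 2 * C₁^2 + 2 * C₁ * B + 4 * C₀ + 1)) * (1 + M^2) := by
  have hL0 : (0:ℝ) ≤ L := by linarith
  have hMM : M ≤ 1 + M^2 := by nlinarith [sq_nonneg (M - 1)]
  have hB1 : (1/2)*(sd+B)^2 ≤ L * ((sd+B)^2*(1+M^2)) := by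
    nlinarith [sq_nonneg (sd+B), sq_nonneg M,
      mul_nonneg (by linarith : (0:ℝ) ≤ L - 1)
        (mul_nonneg (sq_nonneg (sd+B)) (by nlinarith [sq_nonneg M] : (0:ℝ) ≤ 1 + M^2))]
  have hB2 : 2*C₁*sd*M ≤ L * ((2*C₁*sd)*(1+M^2)) := by
    nlinarith [mul_le_mul_of_nonneg_left hMM
        (mul_nonneg (mul_nonneg (by norm_num : (0:ℝ) ≤ 2) hC₁0) hsd0),
      mul_nonneg (by linarith : (0:ℝ) ≤ L - 1)
        (mul_nonneg (mul_nonneg (mul_nonneg (by norm_num : (0:ℝ) ≤ 2) hC₁0) hsd0)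
          (by nlinarith [sq_nonneg M] : (0:ℝ) ≤ 1 + M^2))]
  have hB3 : (1/2)*B^2 + L*((1/2)*B^2) ≤ L * (B^2*(1+M^2)) := by
    nlinarith [mul_nonneg (by linarith : (0:ℝ) ≤ L - 1) (sq_nonneg B),
      mul_nonneg (mul_nonneg hL0 (sq_nonneg B)) (sq_nonneg M)]
  have hB4 : L*((1/2)*C₁^2*M^2) ≤ L * ((2*C₁^2)*(1+M^2)) :=
    mul_le_mul_of_nonneg_left
      (by nlinarith [sq_nonneg C₁, sq_nonneg M,
        mul_nonneg (sq_nonneg C₁) (sq_nonneg M)]) hL0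
  have hB5 : L*(C₁*M*B) ≤ L * ((2*C₁*B)*(1+M^2)) :=
    mul_le_mul_of_nonneg_left
      (by nlinarith [mul_le_mul_of_nonneg_left hMM (mul_nonneg hC₁0 hB0),
        mul_nonneg (mul_nonneg hC₁0 hB0) (by nlinarith [sq_nonneg M] : (0:ℝ) ≤ 1 + M^2)]) hL0
  have hB6 : 4*C₀*M ≤ L * ((4*C₀)*(1+M^2)) := by
    nlinarith [mul_le_mul_of_nonneg_left hMM (mul_nonneg (by norm_num : (0:ℝ) ≤ 4) hC₀0),
      mul_nonneg (by linarith : (0:ℝ) ≤ L - 1)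
        (mul_nonneg (mul_nonneg (by norm_num : (0:ℝ) ≤ 4) hC₀0)
          (by nlinarith [sq_nonneg M] : (0:ℝ) ≤ 1 + M^2))]
  have hB7 : (0:ℝ) ≤ L * (1 * (1+M^2)) :=
    mul_nonneg hL0 (by nlinarith [sq_nonneg M])
  linarith [hB1, hB2, hB3, hB4, hB5, hB6, hB7]


set_option maxHeartbeats 1000000 in
/-- Let `ψ₀` be bounded and `ℤ^d`-periodic, and for `t > t₀ - 1` let
`ψ(x, t) = inf { ψ₀(γ(t₀-1)) + A^{W,b}_{t₀-1,t}(γ) : γ(t) = x }`. Then for any `x₀, x_i`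
there is `c > 0` depending only on `d, |b|, C₀, C₁, x₀, x_i, t₀, t_i` (not on `W`, `ψ₀`)
such that `|ψ(x_i, t_i) - ψ(x₀, t₀)| ≤ c (1 + max_{t₀-1 ≤ τ ≤ t_i} |W(τ) - W(t_i)|²)`. -/
theorem lax_oleinik_time_difference_bound_periodic (d : ℕ) (hd : 1 ≤ d) (C₀ C₁ B : ℝ)
    (t₀ ti : ℝ) (ht : t₀ < ti) (x₀ xi : EuclideanSpace ℝ (Fin d)) :
    ∃ c : ℝ, 0 < c ∧
      ∀ b : EuclideanSpace ℝ (Fin d), ‖b‖ = B →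
      ∀ F : EuclideanSpace ℝ (Fin d) → ℝ, ContDiff ℝ 1 F →
        (∀ (x v : EuclideanSpace ℝ (Fin d)), IsIntVec v → F (x + v) = F x) →
        (∀ x, |F x| ≤ C₀) → (∀ x, ‖gradient F x‖ ≤ C₁) →
      ∀ W : ℝ → ℝ, Continuous W →
      ∀ ψ₀ : EuclideanSpace ℝ (Fin d) → ℝ,
        (∃ Cψ : ℝ, ∀ x, |ψ₀ x| ≤ Cψ) →
        (∀ (x v : EuclideanSpace ℝ (Fin d)), IsIntVec v → ψ₀ (x + v) = ψ₀ x) →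
        |laxB F W b ψ₀ (t₀-1) ti xi - laxB F W b ψ₀ (t₀-1) t₀ x₀|
          ≤ c * (1 + (maxW W (t₀-1) ti)^2) := by
  set sd := Real.sqrt d with hsd_def
  have hsd0 : 0 ≤ sd := Real.sqrt_nonneg _
  set L : ℝ := ti - t₀ + 1 with hL_def
  have hL1 : (1:ℝ) ≤ L := by rw [hL_def]; linarith
  have hL0 : (0:ℝ) ≤ L := by linarith
  refine ⟨L * ((sd + |B|)^2 + 2 * |C₁| * sd + |B|^2 + 2 * |C₁|^2 + 2 * |C₁| * |B| + 4 * |C₀| + 1), ?_, ?_⟩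
  · have h0 : (0:ℝ) ≤ (sd + |B|)^2 + 2 * |C₁| * sd + |B|^2 + 2 * |C₁|^2 + 2 * |C₁| * |B| + 4 * |C₀| := by
      positivity
    nlinarith
  intro b hb F hF hFper hC₀ hC₁ W hW ψ₀ hψbdd hψper
  obtain ⟨Cψ, hCψ⟩ := hψbdd
  have hB0 : 0 ≤ B := hb ▸ norm_nonneg b
  have hC₀0 : 0 ≤ C₀ := le_trans (abs_nonneg _) (hC₀ 0)
  have hC₁0 : 0 ≤ C₁ := le_trans (norm_nonneg _) (hC₁ 0)
  rw [abs_of_nonneg hB0, abs_of_nonneg hC₀0, abs_of_nonneg hC₁0]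
  set s : ℝ := t₀ - 1 with hs_def
  have hst₀ : s ≤ t₀ := by rw [hs_def]; linarith
  have hsti : s ≤ ti := by rw [hs_def]; linarith
  have ht₀s : t₀ - s = 1 := by rw [hs_def]; ring
  have htis : ti - s = L := by rw [hs_def, hL_def]; ring
  set M := maxW W s ti with hM_def
  have hMb : ∀ τ ∈ Icc s ti, |W τ - W ti| ≤ M := by
    intro τ hτ
    apply le_csSup
    · exact (isCompact_Icc.image_of_continuousOn
        ((hW.sub continuous_const).abs.continuousOn)).bddAbove
    · exact mem_image_of_mem _ hτ
  have hM0 : 0 ≤ M := by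
    have h1 := hMb ti ⟨hsti, le_rfl⟩
    simp at h1
    exact h1
  have hM2 : ∀ τ ∈ Icc s t₀, |W τ - W t₀| ≤ 2 * M := by
    intro τ hτ
    have h1 := hMb τ ⟨hτ.1, le_trans hτ.2 ht.le⟩
    have h2 := hMb t₀ ⟨hst₀, ht.le⟩
    calc |W τ - W t₀| ≤ |W τ - W ti| + |W ti - W t₀| := abs_sub_le _ _ _
      _ ≤ M + M := add_le_add h1 (by rwa [abs_sub_comm])
      _ = 2 * M := by ring
  have hWt₀s : |W t₀ - W s| ≤ 2 * M := by
    have h1 := hM2 s ⟨le_rfl, hst₀⟩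
    rwa [abs_sub_comm]
  have hWtis : |W ti - W s| ≤ 2 * M := by
    have h1 := hMb s ⟨le_rfl, hsti⟩
    rw [abs_sub_comm] at h1
    linarith
  have hFb : ∀ (y : EuclideanSpace ℝ (Fin d)) (u1 u2 : ℝ), |W u1 - W u2| ≤ 2 * M →
      -(C₀ * (2 * M)) ≤ F y * (W u1 - W u2) ∧ F y * (W u1 - W u2) ≤ C₀ * (2 * M) := by
    intro y u1 u2 h
    have h1 : |F y * (W u1 - W u2)| ≤ C₀ * (2 * M) := by
      rw [abs_mul]
      exact mul_le_mul (hC₀ y) h (abs_nonneg _) hC₀0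
    exact abs_le.mp h1
  set S₀ : Set ℝ := {r : ℝ | ∃ γ γ' : ℝ → EuclideanSpace ℝ (Fin d),
    IsACWith γ γ' s t₀ ∧ γ t₀ = x₀ ∧ r = ψ₀ (γ s) + actionB F W b γ γ' s t₀} with hS₀_def
  set Si : Set ℝ := {r : ℝ | ∃ γ γ' : ℝ → EuclideanSpace ℝ (Fin d),
    IsACWith γ γ' s ti ∧ γ ti = xi ∧ r = ψ₀ (γ s) + actionB F W b γ γ' s ti} with hSi_def
  have hlax₀ : laxB F W b ψ₀ s t₀ x₀ = sInf S₀ := rfl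
  have hlaxi : laxB F W b ψ₀ s ti xi = sInf Si := rfl
  have hconstAC : ∀ (x : EuclideanSpace ℝ (Fin d)) (t : ℝ),
      IsACWith (fun _ => x) (fun _ => (0 : EuclideanSpace ℝ (Fin d))) s t := by
    intro x t
    refine ⟨intervalIntegrable_const, fun τ _ => ?_⟩
    simp
  have hne₀ : S₀.Nonempty := ⟨_, fun _ => x₀, fun _ => 0, hconstAC x₀ t₀, rfl, rfl⟩
  have hnei : Si.Nonempty := ⟨_, fun _ => xi, fun _ => 0, hconstAC xi ti, rfl, rfl⟩
  have hlb₀ : ∀ r ∈ S₀,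
      -Cψ - 1 * ((1/2) * C₁^2 * (2*M)^2 + C₁ * (2*M) * B + (1/2) * B^2) - C₀ * (2*M) ≤ r := by
    rintro r ⟨γ, γ', hAC, hend, rfl⟩
    have hJ := integrnd_integral_ge (b := b) hC₁ γ γ' hst₀ (by linarith : (0:ℝ) ≤ 2*M) hM2
    rw [hb, ht₀s] at hJ
    have hψ1 := (abs_le.mp (hCψ (γ s))).1
    have hb1 := (hFb (γ s) t₀ s hWt₀s).2
    rw [actionB_eq_integrnd]
    linarith
  have hbdd₀ : BddBelow S₀ := ⟨_, fun r hr => hlb₀ r hr⟩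
  have hlbi : ∀ r ∈ Si,
      -Cψ - L * ((1/2) * C₁^2 * M^2 + C₁ * M * B + (1/2) * B^2) - C₀ * (2*M) ≤ r := by
    rintro r ⟨γ, γ', hAC, hend, rfl⟩
    have hJ := integrnd_integral_ge (b := b) hC₁ γ γ' hsti hM0 hMb
    rw [hb, htis] at hJ
    have hψ1 := (abs_le.mp (hCψ (γ s))).1
    have hb1 := (hFb (γ s) ti s hWtis).2
    rw [actionB_eq_integrnd]
    linarith
  have hbddi : BddBelow Si := ⟨_, fun r hr => hlbi r hr⟩
  have hMM : M ≤ 1 + M^2 := by nlinarith [sq_nonneg (M - 1)]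
  have h1M : (1:ℝ) ≤ 1 + M^2 := by nlinarith [sq_nonneg M]
  have hM2sq : M^2 ≤ 1 + M^2 := by linarith
  -- Direction A : for each competitor of ψ(x₀,t₀), build a line competitor for ψ(xi,ti)
  have hdirA : ∀ r ∈ S₀, sInf Si ≤ r +
      (L * ((sd + B)^2 + 2*C₁*sd + B^2 + 2*C₁^2 + 2*C₁*B + 4*C₀ + 1)) * (1 + M^2) := by
    rintro r ⟨γ, γ', hAC, hend, rfl⟩
    obtain ⟨v, hv, hvz⟩ := exists_intVec_close (xi - γ s)
    rw [← hsd_def] at hvz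
    have hLpos : (0:ℝ) < ti - s := by rw [htis]; linarith
    set w : EuclideanSpace ℝ (Fin d) := (1 / (ti - s)) • (xi - (γ s + v)) with hw_def
    have hznorm : ‖xi - (γ s + v)‖ ≤ sd := by
      have h9 : xi - (γ s + v) = (xi - γ s) - v := by abel
      rw [h9]; exact hvz
    have hwnorm : ‖w‖ ≤ sd := by
      rw [hw_def, norm_smul]
      have h7 : ‖(1 / (ti - s) : ℝ)‖ = 1 / (ti - s) := by
        rw [Real.norm_eq_abs, abs_of_pos (by positivity)]
      rw [h7]
      calc (1 / (ti - s)) * ‖xi - (γ s + v)‖ ≤ 1 * sd :=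
            mul_le_mul (by rw [div_le_one hLpos]; linarith) hznorm (norm_nonneg _) zero_le_one
        _ = sd := one_mul sd
    have hACσ := isACWith_line (γ s + v) w s ti
    have hσti : (γ s + v) + (ti - s) • w = xi := by
      rw [hw_def, smul_smul, mul_one_div, div_self hLpos.ne', one_smul]
      abel
    have hmemσ : (ψ₀ (γ s + v)
        + actionB F W b (fun τ => (γ s + v) + (τ - s) • w) (fun _ => w) s ti) ∈ Si := by
      refine ⟨fun τ => (γ s + v) + (τ - s) • w, fun _ => w, hACσ, hσti, ?_⟩
      simp
    have h1 : sInf Si ≤ ψ₀ (γ s + v)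
        + actionB F W b (fun τ => (γ s + v) + (τ - s) • w) (fun _ => w) s ti :=
      csInf_le hbddi hmemσ
    rw [actionB_eq_integrnd] at h1
    have hψeq : ψ₀ (γ s + v) = ψ₀ (γ s) := hψper (γ s) v hv
    have hFeq : F ((fun τ => (γ s + v) + (τ - s) • w) s) = F (γ s) := by
      have h9 : (fun τ : ℝ => (γ s + v) + (τ - s) • w) s = γ s + v := by simp
      rw [h9]
      exact hFper (γ s) v hv
    rw [hψeq, hFeq] at h1
    have hbr := line_integrnd_le (b := b) hF hC₁ hW (γ s + v) w hsti hM0 hMb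
    rw [hb, htis] at hbr
    have hJ := integrnd_integral_ge (b := b) hC₁ γ γ' hst₀ (by linarith : (0:ℝ) ≤ 2*M) hM2
    rw [hb, ht₀s] at hJ
    have hb1 := (hFb (γ s) ti s hWtis).1
    have hb2 := (hFb (γ s) t₀ s hWt₀s).2
    rw [actionB_eq_integrnd]
    -- numeric part
    have hw1 : (1/2)*(‖w‖+B)^2 ≤ (1/2)*(sd+B)^2 := by
      nlinarith [norm_nonneg w, hwnorm, hB0, hsd0]
    have hw2 : C₁*‖w‖*M ≤ C₁*sd*M := by
      nlinarith [norm_nonneg w, hwnorm, mul_nonneg hC₁0 hM0, hC₁0, hM0]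
    have hbr2 : (∫ τ in s..ti,
        integrnd F W b (fun τ => (γ s + v) + (τ - s) • w) (fun _ => w) ti τ)
        ≤ L * ((1/2)*(sd+B)^2 + C₁*sd*M + (1/2)*B^2) := by
      calc _ ≤ L * ((1/2) * (‖w‖ + B)^2 + C₁ * ‖w‖ * M + (1/2) * B^2) := hbr
        _ ≤ L * ((1/2)*(sd+B)^2 + C₁*sd*M + (1/2)*B^2) :=
          mul_le_mul_of_nonneg_left (by linarith) hL0
    have hfinal := numA sd B C₀ C₁ L M hsd0 hB0 hC₀0 hC₁0 hL1 hM0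
    set IntS := ∫ (τ : ℝ) in s..ti, integrnd F W b (fun τ => γ s + v + (τ - s) • w) (fun _ => w) ti τ with hIntS_def
    set IntG := ∫ (τ : ℝ) in s..t₀, integrnd F W b γ γ' t₀ τ with hIntG_def
    set FBi := F (γ s) * (W ti - W s) with hFBi_def
    set FB0 := F (γ s) * (W t₀ - W s) with hFB0_def
    clear_value IntS IntG FBi FB0
    clear_value sd L M
    linarith [h1, hbr2, hJ, hb1, hb2, hfinal]
  -- Direction B : for each competitor of ψ(xi,ti), build a line competitor for ψ(x₀,t₀)
  have hdirB : ∀ r ∈ Si, sInf S₀ ≤ r +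
      (L * ((sd + B)^2 + 2*C₁*sd + B^2 + 2*C₁^2 + 2*C₁*B + 4*C₀ + 1)) * (1 + M^2) := by
    rintro r ⟨γ, γ', hAC, hend, rfl⟩
    obtain ⟨v, hv, hvz⟩ := exists_intVec_close (x₀ - γ s)
    rw [← hsd_def] at hvz
    set w : EuclideanSpace ℝ (Fin d) := x₀ - (γ s + v) with hw_def
    have hwnorm : ‖w‖ ≤ sd := by
      have h9 : w = (x₀ - γ s) - v := by rw [hw_def]; abel
      rw [h9]; exact hvz
    have hACσ := isACWith_line (γ s + v) w s t₀
    have hσt₀ : (γ s + v) + (t₀ - s) • w = x₀ := by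
      rw [ht₀s, one_smul, hw_def]
      abel
    have hmemσ : (ψ₀ (γ s + v)
        + actionB F W b (fun τ => (γ s + v) + (τ - s) • w) (fun _ => w) s t₀) ∈ S₀ := by
      refine ⟨fun τ => (γ s + v) + (τ - s) • w, fun _ => w, hACσ, hσt₀, ?_⟩
      simp
    have h1 : sInf S₀ ≤ ψ₀ (γ s + v)
        + actionB F W b (fun τ => (γ s + v) + (τ - s) • w) (fun _ => w) s t₀ :=
      csInf_le hbdd₀ hmemσ
    rw [actionB_eq_integrnd] at h1
    have hψeq : ψ₀ (γ s + v) = ψ₀ (γ s) := hψper (γ s) v hv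
    have hFeq : F ((fun τ => (γ s + v) + (τ - s) • w) s) = F (γ s) := by
      have h9 : (fun τ : ℝ => (γ s + v) + (τ - s) • w) s = γ s + v := by simp
      rw [h9]
      exact hFper (γ s) v hv
    rw [hψeq, hFeq] at h1
    have hbr := line_integrnd_le (b := b) hF hC₁ hW (γ s + v) w hst₀
      (by linarith : (0:ℝ) ≤ 2*M) hM2
    rw [hb, ht₀s, one_mul] at hbr
    have hJ := integrnd_integral_ge (b := b) hC₁ γ γ' hsti hM0 hMb
    rw [hb, htis] at hJ
    have hb1 := (hFb (γ s) t₀ s hWt₀s).1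
    have hb2 := (hFb (γ s) ti s hWtis).2
    rw [actionB_eq_integrnd]
    have hbr2 : (∫ τ in s..t₀,
        integrnd F W b (fun τ => (γ s + v) + (τ - s) • w) (fun _ => w) t₀ τ)
        ≤ (1/2)*(sd+B)^2 + 2*C₁*sd*M + (1/2)*B^2 := by
      calc _ ≤ (1/2) * (‖w‖ + B)^2 + C₁ * ‖w‖ * (2*M) + (1/2) * B^2 := hbr
        _ ≤ (1/2)*(sd+B)^2 + 2*C₁*sd*M + (1/2)*B^2 := by
          nlinarith [norm_nonneg w, hwnorm, mul_nonneg hC₁0 hM0, hC₁0, hM0, hB0, hsd0]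
    have hfinal := numB sd B C₀ C₁ L M hsd0 hB0 hC₀0 hC₁0 hL1 hM0
    set IntS := ∫ (τ : ℝ) in s..t₀, integrnd F W b (fun τ => γ s + v + (τ - s) • w) (fun _ => w) t₀ τ with hIntS_def
    set IntG := ∫ (τ : ℝ) in s..ti, integrnd F W b γ γ' ti τ with hIntG_def
    set FBi := F (γ s) * (W ti - W s) with hFBi_def
    set FB0 := F (γ s) * (W t₀ - W s) with hFB0_def
    clear_value IntS IntG FBi FB0
    clear_value sd L M
    linarith [h1, hbr2, hJ, hb1, hb2, hfinal]
  have hA : sInf Si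
      - (L * ((sd + B)^2 + 2*C₁*sd + B^2 + 2*C₁^2 + 2*C₁*B + 4*C₀ + 1)) * (1 + M^2)
      ≤ sInf S₀ :=
    le_csInf hne₀ (fun r hr => by linarith [hdirA r hr])
  have hB' : sInf S₀
      - (L * ((sd + B)^2 + 2*C₁*sd + B^2 + 2*C₁^2 + 2*C₁*B + 4*C₀ + 1)) * (1 + M^2)
      ≤ sInf Si :=
    le_csInf hnei (fun r hr => by linarith [hdirB r hr])
  rw [hlaxi, hlax₀, abs_le]
  constructor <;> linarith
end
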